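/- arXiv:math/0410583 — 3 statements merged into one kernel-verified Lean document; each statement's English description precedes it below -/
import Mathlib

section
/- Let G be a finite group, let χ and ψ be irreducible complex characters of G, let α be an irreducible constituent of the product character χψ, and set K = Ker(α). Then there exists an irreducible character θ of K such that θ is a constituent of the restriction χ_K and θ is also a constituent of the restriction of the complex conjugate character ψ̄ to K. -/
open scoped BigOperators

noncomputable section

/-- Inner product of class functions on a finite group. -/
def charInner (G : Type*) [Group G] [Finite G] (φ ψ : G → ℂ) : ℂ :=
  (Nat.card G : ℂ)⁻¹ * ∑ᶠ g : G, φ g * (starRingEnd ℂ) (ψ g)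

/-- `χ` is the character of some finite-dimensional complex representation. -/
def IsChar (G : Type*) [Group G] (χ : G → ℂ) : Prop :=
  ∃ (n : ℕ) (ρ : G →* Matrix.GeneralLinearGroup (Fin n) ℂ),
    ∀ g : G, χ g = Matrix.trace ((ρ g : Matrix (Fin n) (Fin n) ℂ))

/-- `χ` is an irreducible character. -/
def IsIrrChar (G : Type*) [Group G] [Finite G] (χ : G → ℂ) : Prop :=
  IsChar G χ ∧ charInner G χ χ = 1

/-- The kernel of a character, as a set. -/
def charKer {G : Type*} [Group G] (χ : G → ℂ) : Set G := {g | χ g = χ 1}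

/-- The complex conjugate character. -/
def conjChar {G : Type*} (χ : G → ℂ) : G → ℂ := fun g => (starRingEnd ℂ) (χ g)

/-- Restriction of a character to a subgroup. -/
def res {G : Type*} [Group G] (H : Subgroup G) (χ : G → ℂ) : H → ℂ := fun h => χ (h : G)

open LinearMap Module Finset Representation
open scoped TensorProduct
set_option linter.unusedSectionVars false
set_option linter.unusedVariables false
set_option maxHeartbeats 1000000

namespace CharAux

section E

lemma sum_zpow_primroot {m : ℕ} {ζ : ℂ} (hζ : IsPrimitiveRoot ζ m) (c : ℤ) :
    ∑ i ∈ range m, ζ ^ (c * i) = if (m : ℤ) ∣ c then (m : ℂ) else 0 := by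
  by_cases h : (m : ℤ) ∣ c
  · rw [if_pos h]
    rw [Finset.sum_congr rfl (fun i _ => by
      rw [zpow_mul, (hζ.zpow_eq_one_iff_dvd c).2 h, one_zpow])]
    simp
  · rw [if_neg h]
    have hx : ζ ^ c ≠ 1 := fun hx => h ((hζ.zpow_eq_one_iff_dvd c).1 hx)
    rw [Finset.sum_congr rfl (fun i _ => by rw [zpow_mul, zpow_natCast])]
    rw [geom_sum_eq hx]
    have h1 : (ζ ^ c) ^ m = 1 := by
      rw [← zpow_natCast, ← zpow_mul, mul_comm, zpow_mul, zpow_natCast, hζ.pow_eq_one, one_zpow]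
    rw [h1]; simp

variable {V : Type*} [AddCommGroup V] [Module ℂ V] [FiniteDimensional ℂ V]

/-- spectral projection -/
def eP (f : Module.End ℂ V) (m : ℕ) (ζ : ℂ) (i : ℕ) : Module.End ℂ V :=
  (m : ℂ)⁻¹ • ∑ j ∈ range m, ζ ^ (-(i : ℤ) * j) • f ^ j

variable {f : Module.End ℂ V} {m : ℕ} {ζ : ℂ}

lemma zeta_ne_zero (hm : 0 < m) (hζ : IsPrimitiveRoot ζ m) : ζ ≠ 0 := by
  intro h
  have := hζ.pow_eq_one
  rw [h, zero_pow hm.ne'] at this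
  exact zero_ne_one this

lemma sum_eP (hm : 0 < m) (hf : f ^ m = 1) (hζ : IsPrimitiveRoot ζ m) :
    ∑ i ∈ range m, eP f m ζ i = 1 := by
  unfold eP
  rw [← Finset.smul_sum, Finset.sum_comm]
  have : ∀ j ∈ range m, (∑ i ∈ range m, ζ ^ (-(i : ℤ) * j) • f ^ j)
      = (if (m:ℤ) ∣ (-(j:ℤ)) then (m:ℂ) else 0) • f ^ j := by
    intro j _
    rw [← Finset.sum_smul, ← sum_zpow_primroot hζ (-(j:ℤ))]
    congr 1
    exact Finset.sum_congr rfl (fun i _ => by ring_nf)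
  rw [Finset.sum_congr rfl this]
  rw [Finset.sum_eq_single 0]
  · have hmc : (m : ℂ) ≠ 0 := Nat.cast_ne_zero.mpr hm.ne'
    simp [smul_smul, inv_mul_cancel₀ hmc]
  · intro j hj hj0
    have : ¬ ((m:ℤ) ∣ (-(j:ℤ))) := by
      rw [Int.dvd_neg, Int.natCast_dvd_natCast]
      intro hd
      exact hj0 (Nat.eq_zero_of_dvd_of_lt hd (mem_range.mp hj))
    rw [if_neg this, zero_smul]
  · intro h
    exact absurd (mem_range.mpr hm) h


lemma zpow_congr (hm : 0 < m) (hζ : IsPrimitiveRoot ζ m) {a b : ℤ} (h : (m:ℤ) ∣ (a - b)) :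
    ζ ^ a = ζ ^ b := by
  have hz := zeta_ne_zero hm hζ
  have h1 : ζ ^ (a - b) = 1 := (hζ.zpow_eq_one_iff_dvd (a - b)).2 h
  calc ζ ^ a = ζ ^ (a - b) * ζ ^ b := by rw [← zpow_add₀ hz, sub_add_cancel]
    _ = ζ ^ b := by rw [h1, one_mul]

lemma mul_eP (hm : 0 < m) (hf : f ^ m = 1) (hζ : IsPrimitiveRoot ζ m) (i : ℕ) :
    f * eP f m ζ i = ζ ^ (i : ℤ) • eP f m ζ i := by
  unfold eP
  set a : ℕ → Module.End ℂ V := fun j => ζ ^ ((i : ℤ) * (1 - (j:ℤ))) • f ^ j with ha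
  have key : ∑ j ∈ range m, a (j + 1) = ∑ j ∈ range m, a j := by
    have h0 : a m = a 0 := by
      simp only [ha]
      rw [hf, pow_zero]
      congr 1
      refine zpow_congr hm hζ ⟨-(i:ℤ), by push_cast; ring⟩
    calc ∑ j ∈ range m, a (j + 1) = (∑ j ∈ range (m+1), a j) - a 0 := by
          rw [Finset.sum_range_succ' a m]; abel
      _ = ((∑ j ∈ range m, a j) + a m) - a 0 := by rw [Finset.sum_range_succ]
      _ = ∑ j ∈ range m, a j := by rw [h0]; abel
  have lhs : f * ((m : ℂ)⁻¹ • ∑ j ∈ range m, ζ ^ (-(i : ℤ) * j) • f ^ j)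
      = (m : ℂ)⁻¹ • ∑ j ∈ range m, a (j + 1) := by
    rw [mul_smul_comm, Finset.mul_sum]
    congr 1
    refine Finset.sum_congr rfl (fun j _ => ?_)
    rw [mul_smul_comm, ha]
    simp only []
    rw [← pow_succ']
    congr 1
    congr 1
    push_cast
    ring
  rw [lhs, key, smul_comm]
  congr 1
  rw [Finset.smul_sum]
  refine Finset.sum_congr rfl (fun j _ => ?_)
  rw [ha]
  simp only []
  rw [smul_smul, ← zpow_add₀ (zeta_ne_zero hm hζ)]
  congr 2
  ring

lemma pow_mul_eP (hm : 0 < m) (hf : f ^ m = 1) (hζ : IsPrimitiveRoot ζ m) (i k : ℕ) :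
    f ^ k * eP f m ζ i = ζ ^ ((i : ℤ) * k) • eP f m ζ i := by
  induction k with
  | zero => simp
  | succ k ih =>
    rw [pow_succ, mul_assoc, mul_eP hm hf hζ, mul_smul_comm, ih, smul_smul,
      ← zpow_add₀ (zeta_ne_zero hm hζ)]
    congr 1
    push_cast
    ring_nf

lemma eP_idem (hm : 0 < m) (hf : f ^ m = 1) (hζ : IsPrimitiveRoot ζ m) (i : ℕ) :
    eP f m ζ i * eP f m ζ i = eP f m ζ i := by
  nth_rewrite 1 [eP]
  rw [smul_mul_assoc, Finset.sum_mul]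
  have : ∀ j ∈ range m, (ζ ^ (-(i : ℤ) * j) • f ^ j) * eP f m ζ i = eP f m ζ i := by
    intro j _
    rw [smul_mul_assoc, pow_mul_eP hm hf hζ, smul_smul, ← zpow_add₀ (zeta_ne_zero hm hζ)]
    norm_num
  rw [Finset.sum_congr rfl this, Finset.sum_const, card_range,
    ← Nat.cast_smul_eq_nsmul ℂ, smul_smul,
    inv_mul_cancel₀ (Nat.cast_ne_zero.mpr hm.ne' : (m:ℂ) ≠ 0), one_smul]

lemma trace_eP (hm : 0 < m) (hf : f ^ m = 1) (hζ : IsPrimitiveRoot ζ m) (i : ℕ) :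
    trace ℂ V (eP f m ζ i) = (finrank ℂ (LinearMap.range (eP f m ζ i)) : ℂ) := by
  have hp : IsProj (LinearMap.range (eP f m ζ i)) (eP f m ζ i) := by
    constructor
    · intro x; exact LinearMap.mem_range_self _ x
    · rintro x ⟨y, rfl⟩
      have := congrArg (fun g => g y) (eP_idem hm hf hζ (f := f) i)
      exact this
  exact hp.trace

lemma trace_pow_eq (hm : 0 < m) (hf : f ^ m = 1) (hζ : IsPrimitiveRoot ζ m) (k : ℕ) :
    trace ℂ V (f ^ k) =
      ∑ i ∈ range m, ζ ^ ((i : ℤ) * k) * (finrank ℂ (LinearMap.range (eP f m ζ i)) : ℂ) := by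
  have : f ^ k = ∑ i ∈ range m, ζ ^ ((i : ℤ) * k) • eP f m ζ i := by
    conv_lhs => rw [← mul_one (f ^ k), ← sum_eP hm hf hζ]
    rw [Finset.mul_sum]
    exact Finset.sum_congr rfl (fun i _ => pow_mul_eP hm hf hζ i k)
  rw [this, map_sum]
  refine Finset.sum_congr rfl (fun i _ => ?_)
  rw [map_smul, smul_eq_mul, trace_eP hm hf hζ]

lemma norm_zeta (hm : 0 < m) (hζ : IsPrimitiveRoot ζ m) : ‖ζ‖ = 1 := by
  have h1 : ‖ζ‖ ^ m = 1 := by rw [← norm_pow, hζ.pow_eq_one, norm_one]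
  have h2 : 0 ≤ ‖ζ‖ := norm_nonneg ζ
  rcases lt_trichotomy ‖ζ‖ 1 with h | h | h
  · have := pow_lt_one₀ h2 h hm.ne'
    linarith
  · exact h
  · have := one_lt_pow₀ h hm.ne'
    linarith

lemma conj_zpow_zeta (hm : 0 < m) (hζ : IsPrimitiveRoot ζ m) (c : ℤ) :
    (starRingEnd ℂ) (ζ ^ c) = ζ ^ (-c) := by
  rw [map_zpow₀, ← Complex.inv_eq_conj (norm_zeta hm hζ), inv_zpow, ← zpow_neg]

/-- Main: conjugate of trace of finite-order endomorphism. -/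
lemma conj_trace_eq_trace_pow (f : Module.End ℂ V) {m : ℕ} (hm : 0 < m) (hf : f ^ m = 1) :
    (starRingEnd ℂ) (trace ℂ V f) = trace ℂ V (f ^ (m - 1)) := by
  obtain ⟨ζ, hζ⟩ : ∃ ζ : ℂ, IsPrimitiveRoot ζ m := ⟨_, Complex.isPrimitiveRoot_exp m hm.ne'⟩
  have h1 := trace_pow_eq hm hf hζ 1
  rw [pow_one] at h1
  rw [h1, map_sum, trace_pow_eq hm hf hζ (m - 1)]
  refine Finset.sum_congr rfl (fun i _ => ?_)
  rw [map_mul, conj_zpow_zeta hm hζ, map_natCast]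
  congr 1
  refine zpow_congr hm hζ ⟨-(i:ℤ), ?_⟩
  have hcast : ((m - 1 : ℕ) : ℤ) = (m : ℤ) - 1 := by omega
  rw [hcast]
  push_cast
  ring


end E

section Reps

variable {G : Type*} [Group G] [Finite G]
variable {A B : Type*} [AddCommGroup A] [Module ℂ A] [FiniteDimensional ℂ A]
  [AddCommGroup B] [Module ℂ B] [FiniteDimensional ℂ B]

lemma trace_linHom (ρB : Representation ℂ G B) (ρA : Representation ℂ G A) (g : G) :
    trace ℂ (B →ₗ[ℂ] A) ((linHom ρB ρA) g) = trace ℂ B (ρB g⁻¹) * trace ℂ A (ρA g) := by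
  set e := dualTensorHomEquiv ℂ B A with he
  have hcoe : (e : (Module.Dual ℂ B ⊗[ℂ] A) →ₗ[ℂ] (B →ₗ[ℂ] A)) = dualTensorHom ℂ B A := by
    rw [he]
    rfl
  have hconj : (linHom ρB ρA) g =
      (e.conj) (TensorProduct.map (ρB.dual g) (ρA g)) := by
    rw [LinearEquiv.conj_apply]
    have hcomm := Representation.dualTensorHom_comm ρB ρA g
    rw [← hcoe] at hcomm
    calc (linHom ρB ρA) g
        = ((linHom ρB ρA) g ∘ₗ e.toLinearMap) ∘ₗ e.symm.toLinearMap := by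
          rw [LinearMap.comp_assoc]
          ext f
          simp
      _ = (e.toLinearMap ∘ₗ TensorProduct.map (ρB.dual g) (ρA g)) ∘ₗ e.symm.toLinearMap := by
          rw [← hcomm]
      _ = _ := by rw [LinearMap.comp_assoc]
  rw [hconj, trace_conj', trace_tensorProduct', Representation.dual_apply, trace_transpose']


lemma conj_trace_rep (ρ : Representation ℂ G B) (g : G) :
    (starRingEnd ℂ) (trace ℂ B (ρ g)) = trace ℂ B (ρ g⁻¹) := by
  letI : Fintype G := Fintype.ofFinite G
  have hm : 0 < Fintype.card G := Fintype.card_pos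
  have hf : (ρ g) ^ Fintype.card G = 1 := by
    rw [← map_pow, pow_card_eq_one, map_one]
  rw [conj_trace_eq_trace_pow (ρ g) hm hf, ← map_pow]
  congr 2
  have : g ^ (Fintype.card G - 1) * g = 1 := by
    rw [← pow_succ, Nat.sub_add_cancel hm, pow_card_eq_one]
  exact eq_inv_of_mul_eq_one_left this

lemma charInner_eq_finrank (ρA : Representation ℂ G A) (ρB : Representation ℂ G B) :
    charInner G (fun g => trace ℂ A (ρA g)) (fun g => trace ℂ B (ρB g)) =
      (finrank ℂ (invariants (linHom ρB ρA)) : ℂ) := by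
  letI : Fintype G := Fintype.ofFinite G
  have hc : (Fintype.card G : ℂ) ≠ 0 := Nat.cast_ne_zero.mpr Fintype.card_pos.ne'
  letI : Invertible (Fintype.card G : ℂ) := invertibleOfNonzero hc
  have h1 : charInner G (fun g => trace ℂ A (ρA g)) (fun g => trace ℂ B (ρB g)) =
      (Fintype.card G : ℂ)⁻¹ * ∑ g : G, trace ℂ (B →ₗ[ℂ] A) ((linHom ρB ρA) g) := by
    rw [charInner, finsum_eq_sum_of_fintype, Nat.card_eq_fintype_card]
    congr 1
    refine Finset.sum_congr rfl (fun g _ => ?_)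
    rw [conj_trace_rep, trace_linHom, mul_comm]
  rw [h1]
  have h2 := (isProj_averageMap (linHom ρB ρA)).trace
  have h3 : (linHom ρB ρA).averageMap
      = ⅟ (Fintype.card G : ℂ) • ∑ g : G, (linHom ρB ρA) g := by
    rw [Representation.averageMap, GroupAlgebra.average, map_smul, map_sum]
    congr 1
    refine Finset.sum_congr rfl (fun g _ => ?_)
    rw [MonoidAlgebra.of_apply]
    have := Representation.asAlgebraHom_single (linHom ρB ρA) g (1 : ℂ)
    rw [this, one_smul]
  rw [h3] at h2
  rw [map_smul, smul_eq_mul, invOf_eq_inv] at h2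
  rw [← h2, map_sum]

variable {G : Type*} [Group G] [Finite G]
variable {W A : Type*} [AddCommGroup W] [Module ℂ W] [FiniteDimensional ℂ W]
  [AddCommGroup A] [Module ℂ A] [FiniteDimensional ℂ A]

/-- A submodule stable under the representation. -/
def Stable (ρ : Representation ℂ G W) (p : Submodule ℂ W) : Prop :=
  ∀ g : G, ∀ x ∈ p, ρ g x ∈ p

lemma mem_invariants_linHom (ρB : Representation ℂ G W) (ρA : Representation ℂ G A)
    (f : W →ₗ[ℂ] A) :
    f ∈ invariants (linHom ρB ρA) ↔ ∀ (g : G) (x : W), ρA g (f x) = f (ρB g x) := by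
  rw [mem_invariants]
  constructor
  · intro h g x
    have hg := h g
    rw [linHom_apply] at hg
    have := congrArg (fun u => u (ρB g x)) hg
    simp only [LinearMap.comp_apply] at this
    have hx : (ρB g⁻¹) ((ρB g) x) = x := by
      rw [← Module.End.mul_apply, ← map_mul, inv_mul_cancel, map_one, Module.End.one_apply]
    rw [hx] at this
    exact this
  · intro h g
    rw [linHom_apply]
    ext x
    simp only [LinearMap.comp_apply]
    rw [h g (ρB g⁻¹ x)]
    congr 1
    rw [← Module.End.mul_apply, ← map_mul, mul_inv_cancel, map_one, Module.End.one_apply]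

lemma exists_equivariant_proj (ρ : Representation ℂ G W) (p : Submodule ℂ W)
    (hp : Stable ρ p) :
    ∃ π : W →ₗ[ℂ] W, (∀ (g : G) (x : W), ρ g (π x) = π (ρ g x)) ∧ (∀ x, π x ∈ p) ∧
      (∀ x ∈ p, π x = x) := by
  letI : Fintype G := Fintype.ofFinite G
  have hc : (Fintype.card G : ℂ) ≠ 0 := Nat.cast_ne_zero.mpr Fintype.card_pos.ne'
  obtain ⟨q, hq⟩ := Submodule.exists_isCompl p
  set π₀ : W →ₗ[ℂ] W := p.subtype ∘ₗ p.projectionOnto q hq with hπ₀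
  have hπ₀p : ∀ x, π₀ x ∈ p := fun x => (p.linearProjOfIsCompl q hq x).2
  have hπ₀id : ∀ x ∈ p, π₀ x = x := by
    intro x hx
    rw [hπ₀]
    simp only [LinearMap.comp_apply, Submodule.coe_subtype]
    rw [show x = ((⟨x, hx⟩ : p) : W) from rfl, Submodule.projectionOnto_apply_left hq]
  refine ⟨(Fintype.card G : ℂ)⁻¹ • ∑ g : G, ρ g ∘ₗ π₀ ∘ₗ ρ g⁻¹, ?_, ?_, ?_⟩
  · intro h x
    simp only [LinearMap.smul_apply, LinearMap.sum_apply, LinearMap.comp_apply, map_smul,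
      map_sum]
    congr 1
    refine Fintype.sum_equiv (Equiv.mulLeft h) _ _ (fun g => ?_)
    simp only [Equiv.coe_mulLeft]
    have h1 : ρ h ((ρ g) (π₀ ((ρ g⁻¹) x))) = ρ (h * g) (π₀ ((ρ g⁻¹) x)) := by
      rw [map_mul, Module.End.mul_apply]
    have h2 : (ρ (h * g)⁻¹) ((ρ h) x) = (ρ g⁻¹) x := by
      rw [← Module.End.mul_apply, ← map_mul]
      congr 1
      rw [mul_inv_rev, inv_mul_cancel_right]
    rw [h1, h2]
  · intro x
    simp only [LinearMap.smul_apply, LinearMap.sum_apply, LinearMap.comp_apply]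
    refine Submodule.smul_mem _ _ (Submodule.sum_mem _ (fun g _ => ?_))
    exact hp g _ (hπ₀p _)
  · intro x hx
    simp only [LinearMap.smul_apply, LinearMap.sum_apply, LinearMap.comp_apply]
    have : ∀ g : G, ρ g (π₀ ((ρ g⁻¹) x)) = x := by
      intro g
      rw [hπ₀id _ (hp g⁻¹ x hx), ← Module.End.mul_apply, ← map_mul, mul_inv_cancel, map_one,
        Module.End.one_apply]
    rw [Finset.sum_congr rfl (fun g _ => this g), Finset.sum_const, card_univ,
      ← Nat.cast_smul_eq_nsmul ℂ, smul_smul, inv_mul_cancel₀ hc, one_smul]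

lemma exists_minimal_stable (ρ : Representation ℂ G W) (q : Submodule ℂ W)
    (hq : Stable ρ q) (hne : q ≠ ⊥) :
    ∃ s : Submodule ℂ W, s ≤ q ∧ Stable ρ s ∧ s ≠ ⊥ ∧
      ∀ t, Stable ρ t → t ≤ s → t ≠ ⊥ → t = s := by
  suffices H : ∀ n (q : Submodule ℂ W), finrank ℂ q ≤ n → Stable ρ q → q ≠ ⊥ →
      ∃ s : Submodule ℂ W, s ≤ q ∧ Stable ρ s ∧ s ≠ ⊥ ∧
        ∀ t, Stable ρ t → t ≤ s → t ≠ ⊥ → t = s by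
    exact H (finrank ℂ q) q le_rfl hq hne
  intro n
  induction n with
  | zero =>
    intro q hfr hq hne
    exact absurd (Submodule.finrank_eq_zero.mp (Nat.le_zero.mp hfr)) hne
  | succ n ih =>
    intro q hfr hq hne
    by_cases hmin : ∀ t, Stable ρ t → t ≤ q → t ≠ ⊥ → t = q
    · exact ⟨q, le_rfl, hq, hne, hmin⟩
    · push_neg at hmin
      obtain ⟨t, ht, htq, htne, htq'⟩ := hmin
      have hlt : t < q := lt_of_le_of_ne htq htq'
      have : finrank ℂ t ≤ n := by
        have := Submodule.finrank_lt_finrank_of_lt hlt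
        omega
      obtain ⟨s, hs1, hs2, hs3, hs4⟩ := ih t this ht htne
      exact ⟨s, hs1.trans htq, hs2, hs3, hs4⟩

lemma exists_simple_stable_disjoint_ker (ρW : Representation ℂ G W) (ρA : Representation ℂ G A)
    (f : W →ₗ[ℂ] A) (hf : ∀ (g : G) (x : W), ρA g (f x) = f (ρW g x)) (hne : f ≠ 0) :
    ∃ S : Submodule ℂ W, Stable ρW S ∧ S ≠ ⊥ ∧
      (∀ t, Stable ρW t → t ≤ S → t ≠ ⊥ → t = S) ∧ Disjoint S (ker f) := by
  have hker : Stable ρW (ker f) := by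
    intro g x hx
    rw [LinearMap.mem_ker] at hx ⊢
    rw [← hf g x, hx, map_zero]
  obtain ⟨π, hπcomm, hπmem, hπid⟩ := exists_equivariant_proj ρW (ker f) hker
  have hQstable : Stable ρW (ker π) := by
    intro g x hx
    rw [LinearMap.mem_ker] at hx ⊢
    rw [← hπcomm g x, hx, map_zero]
  have hdisj : Disjoint (ker π) (ker f) := by
    rw [disjoint_iff]
    rw [Submodule.eq_bot_iff]
    rintro x ⟨hx1, hx2⟩
    have := hπid x hx2
    rw [LinearMap.mem_ker.mp hx1] at this
    exact this.symm
  have hQne : ker π ≠ ⊥ := by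
    intro hbot
    have hinj : Function.Injective π := LinearMap.ker_eq_bot.mp hbot
    have hrange : LinearMap.range π ≤ ker f := by
      rintro y ⟨x, rfl⟩
      exact hπmem x
    have h1 : finrank ℂ W = finrank ℂ (LinearMap.range π) :=
      (LinearMap.finrank_range_of_inj hinj).symm
    have h2 : finrank ℂ (LinearMap.range π) ≤ finrank ℂ (ker f) :=
      Submodule.finrank_mono hrange
    have h3 : finrank ℂ (ker f : Submodule ℂ W) ≤ finrank ℂ W := Submodule.finrank_le _
    have : finrank ℂ (ker f : Submodule ℂ W) = finrank ℂ W := by omega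
    have := Submodule.eq_top_of_finrank_eq this
    exact hne (LinearMap.ker_eq_top.mp this)
  obtain ⟨S, hSQ, hS1, hS2, hS3⟩ := exists_minimal_stable ρW (ker π) hQstable hQne
  exact ⟨S, hS1, hS2, hS3, hdisj.mono_left hSQ⟩

/-- Restriction of a representation to a stable submodule. -/
def subrep (ρ : Representation ℂ G W) (p : Submodule ℂ W) (hp : Stable ρ p) :
    Representation ℂ G p where
  toFun g := (ρ g).restrict (hp g)
  map_one' := by
    ext x
    simp [LinearMap.restrict_apply]
  map_mul' g h := by
    ext x
    simp [LinearMap.restrict_apply]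

@[simp] lemma subrep_apply (ρ : Representation ℂ G W) (p : Submodule ℂ W) (hp : Stable ρ p)
    (g : G) (x : p) : ((subrep ρ p hp) g x : W) = ρ g (x : W) := rfl

lemma schur {V : Type*} [AddCommGroup V] [Module ℂ V] [FiniteDimensional ℂ V]
    (ρ : Representation ℂ G V) [Nontrivial V]
    (hsimple : ∀ t : Submodule ℂ V, Stable ρ t → t = ⊥ ∨ t = ⊤) :
    finrank ℂ (invariants (linHom ρ ρ)) = 1 := by
  have hid : (1 : V →ₗ[ℂ] V) ∈ invariants (linHom ρ ρ) := by
    rw [mem_invariants_linHom]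
    intro g x
    simp
  have hone_ne : (1 : V →ₗ[ℂ] V) ≠ 0 := by
    intro h
    obtain ⟨x, hx⟩ := exists_ne (0 : V)
    have := congrArg (fun u => u x) h
    simp at this
    exact hx this
  have hspan : invariants (linHom ρ ρ) = Submodule.span ℂ {(1 : V →ₗ[ℂ] V)} := by
    refine le_antisymm ?_ ?_
    · intro f hfmem
      rw [mem_invariants_linHom] at hfmem
      obtain ⟨c, hc⟩ := Module.End.exists_eigenvalue (f : Module.End ℂ V)
      obtain ⟨v, hv⟩ := hc.exists_hasEigenvector
      have hker : Stable ρ (ker (f - c • 1)) := by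
        intro g x hx
        rw [LinearMap.mem_ker] at hx ⊢
        have h1 : (f - c • 1) ((ρ g) x) = (ρ g) ((f - c • 1) x) := by
          simp only [LinearMap.sub_apply, LinearMap.smul_apply, Module.End.one_apply]
          rw [← hfmem g x, map_sub, map_smul]
        rw [h1, hx, map_zero]
      have hkerne : ker (f - c • 1) ≠ ⊥ := by
        intro hbot
        have hv1 : v ∈ ker (f - c • 1) := by
          rw [LinearMap.mem_ker]
          simp only [LinearMap.sub_apply, LinearMap.smul_apply, Module.End.one_apply]
          rw [hv.apply_eq_smul, sub_self]
        rw [hbot, Submodule.mem_bot] at hv1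
        exact hv.right hv1
      have hkertop : ker (f - c • 1) = ⊤ := (hsimple _ hker).resolve_left hkerne
      have hfc : f = c • 1 := by
        ext x
        have : x ∈ ker (f - c • 1) := hkertop ▸ Submodule.mem_top
        rw [LinearMap.mem_ker] at this
        simp only [LinearMap.sub_apply, LinearMap.smul_apply, Module.End.one_apply] at this
        have := sub_eq_zero.mp this
        simpa using this
      rw [hfc]
      exact Submodule.smul_mem _ c (Submodule.mem_span_singleton_self _)
    · rw [Submodule.span_le, Set.singleton_subset_iff]
      exact hid
  rw [hspan]
  exact finrank_span_singleton hone_ne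

variable {G : Type*} [Group G] [Finite G]

/-- The linear representation associated to a matrix representation. -/
def matRep {n : ℕ} (ρ : G →* Matrix.GeneralLinearGroup (Fin n) ℂ) :
    Representation ℂ G (Fin n → ℂ) :=
  (Units.coeHom _).comp ((Matrix.GeneralLinearGroup.toLin.toMonoidHom).comp ρ)

lemma trace_mulVecLin {n : ℕ} (M : Matrix (Fin n) (Fin n) ℂ) :
    trace ℂ (Fin n → ℂ) M.mulVecLin = M.trace := by
  rw [trace_eq_matrix_trace ℂ (Pi.basisFun ℂ (Fin n)), LinearMap.toMatrix_eq_toMatrix',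
    ← Matrix.toLin'_apply', LinearMap.toMatrix'_toLin']

lemma matRep_trace {n : ℕ} (ρ : G →* Matrix.GeneralLinearGroup (Fin n) ℂ) (g : G) :
    trace ℂ (Fin n → ℂ) (matRep ρ g) = Matrix.trace ((ρ g : Matrix (Fin n) (Fin n) ℂ)) := by
  have : matRep ρ g = ((ρ g : Matrix (Fin n) (Fin n) ℂ)).mulVecLin := by
    show ((Matrix.GeneralLinearGroup.toLin (ρ g) : ((Fin n → ℂ) →ₗ[ℂ] (Fin n → ℂ))ˣ) :
      (Fin n → ℂ) →ₗ[ℂ] (Fin n → ℂ)) = _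
    rw [Matrix.GeneralLinearGroup.coe_toLin]
  rw [this, trace_mulVecLin]

/-- entrywise conjugate of a matrix representation -/
def conjGL {n : ℕ} (ρ : G →* Matrix.GeneralLinearGroup (Fin n) ℂ) :
    G →* Matrix.GeneralLinearGroup (Fin n) ℂ :=
  (Units.map ((starRingEnd ℂ).mapMatrix.toMonoidHom)).comp ρ

lemma conjGL_trace {n : ℕ} (ρ : G →* Matrix.GeneralLinearGroup (Fin n) ℂ) (g : G) :
    Matrix.trace ((conjGL ρ g : Matrix (Fin n) (Fin n) ℂ)) =
      (starRingEnd ℂ) (Matrix.trace ((ρ g : Matrix (Fin n) (Fin n) ℂ))) := by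
  show Matrix.trace ((Units.map ((starRingEnd ℂ).mapMatrix.toMonoidHom)) (ρ g) :
    Matrix (Fin n) (Fin n) ℂ) = _
  rw [Units.coe_map]
  simp [Matrix.trace, Matrix.diag, map_sum, RingHom.mapMatrix_apply, Matrix.map_apply]

/-- Every trace function of a finite-dimensional representation is a character. -/
lemma isChar_of_rep {K : Type*} [Group K] {S : Type*} [AddCommGroup S] [Module ℂ S]
    [FiniteDimensional ℂ S] (ρ : Representation ℂ K S) :
    ∃ (n : ℕ) (ρM : K →* Matrix.GeneralLinearGroup (Fin n) ℂ),
      ∀ k : K, trace ℂ S (ρ k) = Matrix.trace ((ρM k : Matrix (Fin n) (Fin n) ℂ)) := by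
  set b := Module.finBasis ℂ S
  refine ⟨finrank ℂ S,
    (Units.map ((LinearMap.toMatrixAlgEquiv b).toAlgHom.toRingHom.toMonoidHom)).comp
      ρ.toHomUnits, fun k => ?_⟩
  have h1 : (((Units.map ((LinearMap.toMatrixAlgEquiv b).toAlgHom.toRingHom.toMonoidHom)).comp
      ρ.toHomUnits) k : Matrix (Fin (finrank ℂ S)) (Fin (finrank ℂ S)) ℂ)
      = LinearMap.toMatrixAlgEquiv b (ρ k) := by
    simp [Units.coe_map, MonoidHom.coe_toHomUnits]
  rw [h1]
  rw [trace_eq_matrix_trace ℂ b]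
  congr 1


lemma exists_equivariant_of_charInner_ne_zero (ρA : Representation ℂ G A)
    (ρB : Representation ℂ G B)
    (h : charInner G (fun g => trace ℂ A (ρA g)) (fun g => trace ℂ B (ρB g)) ≠ 0) :
    ∃ f : B →ₗ[ℂ] A, (∀ (g : G) (x : B), ρA g (f x) = f (ρB g x)) ∧ f ≠ 0 := by
  rw [charInner_eq_finrank] at h
  have hb : invariants (linHom ρB ρA) ≠ ⊥ := by
    intro hb
    rw [hb, finrank_bot, Nat.cast_zero] at h
    exact h rfl
  obtain ⟨f, hf, hne⟩ := (Submodule.ne_bot_iff _).mp hb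
  exact ⟨f, (mem_invariants_linHom _ _ f).mp hf, hne⟩

lemma charInner_ne_zero_of_equivariant (ρA : Representation ℂ G A)
    (ρB : Representation ℂ G B) (f : B →ₗ[ℂ] A)
    (hcomm : ∀ (g : G) (x : B), ρA g (f x) = f (ρB g x)) (hne : f ≠ 0) :
    charInner G (fun g => trace ℂ A (ρA g)) (fun g => trace ℂ B (ρB g)) ≠ 0 := by
  rw [charInner_eq_finrank]
  have hb : invariants (linHom ρB ρA) ≠ ⊥ := by
    intro hb
    have := (mem_invariants_linHom ρB ρA f).mpr hcomm
    rw [hb, Submodule.mem_bot] at this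
    exact hne this
  exact_mod_cast fun h => hb (Submodule.finrank_eq_zero.mp h)

lemma restrict_charInner_ne_zero (K : Subgroup G) (ρA : Representation ℂ G A)
    (ρB : Representation ℂ G B)
    (h : charInner G (fun g => trace ℂ A (ρA g)) (fun g => trace ℂ B (ρB g)) ≠ 0) :
    charInner K (fun k => trace ℂ A ((ρA.comp K.subtype) k))
      (fun k => trace ℂ B ((ρB.comp K.subtype) k)) ≠ 0 := by
  rw [charInner_eq_finrank] at h ⊢
  have hG : invariants (linHom ρB ρA) ≠ ⊥ := by
    intro hb
    rw [hb, finrank_bot, Nat.cast_zero] at h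
    exact h rfl
  have hmono : invariants (linHom ρB ρA) ≤
      invariants (linHom (ρB.comp K.subtype) (ρA.comp K.subtype)) := by
    intro f hf
    rw [mem_invariants_linHom] at hf ⊢
    intro k x
    exact hf (↑k) x
  have hKne : invariants (linHom (ρB.comp K.subtype) (ρA.comp K.subtype)) ≠ ⊥ := by
    intro hb
    exact hG (le_bot_iff.mp (hb ▸ hmono))
  exact_mod_cast fun hh => hKne (Submodule.finrank_eq_zero.mp hh)

lemma schur_charInner {V : Type*} [AddCommGroup V] [Module ℂ V] [FiniteDimensional ℂ V]
    (ρ : Representation ℂ G V) [Nontrivial V]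
    (hsimple : ∀ t : Submodule ℂ V, Stable ρ t → t = ⊥ ∨ t = ⊤) :
    charInner G (fun g => trace ℂ V (ρ g)) (fun g => trace ℂ V (ρ g)) = 1 := by
  rw [charInner_eq_finrank ρ ρ, schur ρ hsimple, Nat.cast_one]

end Reps

end CharAux

theorem stmt_0 {G : Type*} [Group G] [Finite G] (χ ψ α : G → ℂ)
    (hχ : IsIrrChar G χ) (hψ : IsIrrChar G ψ) (hα : IsIrrChar G α)
    (hcon : charInner G (χ * ψ) α ≠ 0)
    (K : Subgroup G) (hK : (K : Set G) = charKer α) :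
    ∃ θ : K → ℂ, IsIrrChar K θ ∧ charInner K (res K χ) θ ≠ 0 ∧
      charInner K (res K (conjChar ψ)) θ ≠ 0 := by
  classical
  obtain ⟨⟨n1, ρ1, h1⟩, -⟩ := hχ
  obtain ⟨⟨n2, ρ2, h2⟩, -⟩ := hψ
  obtain ⟨⟨n3, ρ3, h3⟩, -⟩ := hα
  set ρχ := CharAux.matRep ρ1 with hρχdef
  set ρψ := CharAux.matRep ρ2 with hρψdef
  set ρψc := CharAux.matRep (CharAux.conjGL ρ2) with hρψcdef
  set ρα := CharAux.matRep ρ3 with hραdef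
  set ρT := ρχ.tprod ρψ with hρTdef
  have hχt : χ = fun g => trace ℂ (Fin n1 → ℂ) (ρχ g) :=
    funext fun g => by rw [h1 g, CharAux.matRep_trace]
  have hψt : ψ = fun g => trace ℂ (Fin n2 → ℂ) (ρψ g) :=
    funext fun g => by rw [h2 g, CharAux.matRep_trace]
  have hψct : conjChar ψ = fun g => trace ℂ (Fin n2 → ℂ) (ρψc g) :=
    funext fun g => by
      rw [conjChar, h2 g, hρψcdef, CharAux.matRep_trace, CharAux.conjGL_trace]
  have hTt : (χ * ψ) = fun g => trace ℂ ((Fin n1 → ℂ) ⊗[ℂ] (Fin n2 → ℂ)) (ρT g) :=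
    funext fun g => by
      rw [Pi.mul_apply, hρTdef]
      rw [show (ρχ.tprod ρψ) g = TensorProduct.map (ρχ g) (ρψ g) from rfl,
        trace_tensorProduct', h1 g, h2 g, CharAux.matRep_trace, CharAux.matRep_trace]
  have hαt : α = fun g => trace ℂ (Fin n3 → ℂ) (ρα g) :=
    funext fun g => by rw [h3 g, CharAux.matRep_trace]
  set σ := K.subtype with hσdef
  -- Step A
  have hcon' : charInner G (fun g => trace ℂ ((Fin n1 → ℂ) ⊗[ℂ] (Fin n2 → ℂ)) (ρT g))
      (fun g => trace ℂ (Fin n3 → ℂ) (ρα g)) ≠ 0 := by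
    rw [← hTt, ← hαt]
    exact hcon
  have hK0 := CharAux.restrict_charInner_ne_zero K ρT ρα hcon'
  have hresT : res K (χ * ψ) =
      fun k => trace ℂ ((Fin n1 → ℂ) ⊗[ℂ] (Fin n2 → ℂ)) ((ρT.comp σ) k) :=
    funext fun k => congrFun hTt (↑k)
  have hresα : res K α = fun k => trace ℂ (Fin n3 → ℂ) ((ρα.comp σ) k) :=
    funext fun k => congrFun hαt (↑k)
  have hresχ : res K χ = fun k => trace ℂ (Fin n1 → ℂ) ((ρχ.comp σ) k) :=
    funext fun k => congrFun hχt (↑k)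
  have hresψc : res K (conjChar ψ) =
      fun k => trace ℂ (Fin n2 → ℂ) ((ρψc.comp σ) k) :=
    funext fun k => congrFun hψct (↑k)
  have hKne0 : charInner K (res K (χ * ψ)) (res K α) ≠ 0 := by
    rw [hresT, hresα]
    exact hK0
  -- Step A algebra: factor out conj (α 1)
  letI : Fintype K := Fintype.ofFinite K
  have hαK : ∀ k : K, α ↑k = α 1 := fun k => by
    have hm : (k : G) ∈ (K : Set G) := k.2
    rw [hK] at hm
    exact hm
  have hfactor : charInner K (res K (χ * ψ)) (res K α)
      = (starRingEnd ℂ) (α 1) * charInner K (res K χ) (res K (conjChar ψ)) := by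
    rw [charInner, charInner]
    have e1 : ∑ᶠ k : K, res K (χ * ψ) k * (starRingEnd ℂ) (res K α k)
        = (starRingEnd ℂ) (α 1) *
          ∑ᶠ k : K, res K χ k * (starRingEnd ℂ) (res K (conjChar ψ) k) := by
      rw [finsum_eq_sum_of_fintype, finsum_eq_sum_of_fintype, Finset.mul_sum]
      refine Finset.sum_congr rfl (fun k _ => ?_)
      show (χ * ψ) ↑k * (starRingEnd ℂ) (α ↑k) =
        (starRingEnd ℂ) (α 1) * (χ ↑k * (starRingEnd ℂ) (conjChar ψ ↑k))
      simp only [conjChar]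
      rw [Complex.conj_conj, hαK k, Pi.mul_apply]
      ring
    rw [e1]
    ring
  have hT2 : charInner K (res K χ) (res K (conjChar ψ)) ≠ 0 := by
    intro h
    exact hKne0 (by rw [hfactor, h, mul_zero])
  -- Step B
  rw [hresχ, hresψc] at hT2
  obtain ⟨f, hfcomm, hfne⟩ :=
    CharAux.exists_equivariant_of_charInner_ne_zero (ρχ.comp σ) (ρψc.comp σ) hT2
  obtain ⟨S, hSst, hSne, hSmin, hSdisj⟩ :=
    CharAux.exists_simple_stable_disjoint_ker (ρψc.comp σ) (ρχ.comp σ) f hfcomm hfne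
  haveI : Nontrivial S := Submodule.nontrivial_iff_ne_bot.mpr hSne
  set ρS := CharAux.subrep (ρψc.comp σ) S hSst with hρSdef
  refine ⟨fun k => trace ℂ S (ρS k), ⟨?_, ?_⟩, ?_, ?_⟩
  · -- IsChar
    obtain ⟨n, ρM, hM⟩ := CharAux.isChar_of_rep ρS
    exact ⟨n, ρM, hM⟩
  · -- norm 1
    apply CharAux.schur_charInner
    intro t hts
    have hmap : CharAux.Stable (ρψc.comp σ) (t.map S.subtype) := by
      rintro k y hy
      rw [Submodule.mem_map] at hy ⊢
      obtain ⟨x, hx, rfl⟩ := hy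
      exact ⟨ρS k x, hts k x hx, (CharAux.subrep_apply (ρψc.comp σ) S hSst k x)⟩
    have hinj : Function.Injective (S.subtype) := Subtype.coe_injective
    by_cases hbot : t.map S.subtype = ⊥
    · left
      apply Submodule.map_injective_of_injective hinj
      rw [hbot, Submodule.map_bot]
    · right
      have hle : t.map S.subtype ≤ S := Submodule.map_subtype_le S t
      have heq := hSmin _ hmap hle hbot
      apply Submodule.map_injective_of_injective hinj
      rw [Submodule.map_subtype_top, heq]
  · -- constituent of χ restricted to K
    rw [hresχ]
    refine CharAux.charInner_ne_zero_of_equivariant (ρχ.comp σ) ρS (f ∘ₗ S.subtype) ?_ ?_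
    · intro k x
      have h1 : (ρχ.comp σ) k (f ↑x) = f ((ρψc.comp σ) k ↑x) := hfcomm k ↑x
      have h2 : ((ρψc.comp σ)) k (↑x : Fin n2 → ℂ) = ↑(ρS k x) :=
        (CharAux.subrep_apply (ρψc.comp σ) S hSst k x).symm
      simp only [LinearMap.comp_apply, Submodule.coe_subtype]
      rw [h1, h2]
    · obtain ⟨x, hxS, hx0⟩ := (Submodule.ne_bot_iff S).mp hSne
      intro h
      have hz : f x = 0 := by
        have := congrArg (fun u => u ⟨x, hxS⟩) h
        simpa using this
      exact hx0 (Submodule.disjoint_def.mp hSdisj x hxS (LinearMap.mem_ker.mpr hz))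
  · -- constituent of conj ψ restricted to K
    rw [hresψc]
    refine CharAux.charInner_ne_zero_of_equivariant (ρψc.comp σ) ρS S.subtype ?_ ?_
    · intro k x
      exact (CharAux.subrep_apply (ρψc.comp σ) S hSst k x)
    · obtain ⟨x, hxS, hx0⟩ := (Submodule.ne_bot_iff S).mp hSne
      intro h
      have := congrArg (fun u => u ⟨x, hxS⟩) h
      simp only [Submodule.coe_subtype, LinearMap.zero_apply] at this
      exact hx0 this
end
end

section
/- Let G be a finite group, K a normal subgroup, and χ, ψ irreducible characters of G. Suppose θ is an irreducible character of K that is a constituent of χ restricted to K and also a constituent of ψ̄ restricted to K, and suppose θ is linear (θ(1) = 1). Then the commutator subgroup [K, K] is contained in Ker(χψ). -/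
open scoped BigOperators

noncomputable section

namespace StmtAux

open Matrix
open scoped Kronecker ComplexOrder

/-- vectorize a matrix -/
def vec {n : ℕ} (M : Matrix (Fin n) (Fin n) ℂ) : Fin n × Fin n → ℂ := fun p => M p.1 p.2

lemma vec_inj {n : ℕ} {M N : Matrix (Fin n) (Fin n) ℂ} (h : vec M = vec N) : M = N := by
  ext i j; exact congrFun h (i, j)

lemma sum_mulVec {ι : Type*} (s : Finset ι) {m k : Type*} [Fintype k]
    (M : ι → Matrix m k ℂ) (v : k → ℂ) :
    (∑ i ∈ s, M i) *ᵥ v = ∑ i ∈ s, (M i *ᵥ v) := by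
  funext j
  rw [Finset.sum_apply]
  simp only [Matrix.mulVec, dotProduct, Matrix.sum_apply, Finset.sum_mul]
  exact Finset.sum_comm

lemma kron_mulVec {n : ℕ} (A B M : Matrix (Fin n) (Fin n) ℂ) :
    (A ⊗ₖ B) *ᵥ vec M = vec (A * M * Bᵀ) := by
  funext p
  simp only [vec, Matrix.mulVec, dotProduct, Matrix.kroneckerMap_apply,
    Matrix.mul_apply, Matrix.transpose_apply, Fintype.sum_prod_type, Finset.sum_mul,
    Finset.mul_sum]
  rw [Finset.sum_comm]
  exact Finset.sum_congr rfl fun k _ => Finset.sum_congr rfl fun l _ => by ring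

lemma trace_map_conj {n : ℕ} (M : Matrix (Fin n) (Fin n) ℂ) :
    Matrix.trace (M.map (starRingEnd ℂ)) = (starRingEnd ℂ) (Matrix.trace M) := by
  simp [Matrix.trace, Matrix.diag, map_sum, Matrix.map_apply]

lemma map_conj_transpose {n : ℕ} (M : Matrix (Fin n) (Fin n) ℂ) :
    (M.map (starRingEnd ℂ))ᵀ = Mᴴ := rfl

lemma trace_mul_conjTranspose_self_nonneg {n : ℕ} (X : Matrix (Fin n) (Fin n) ℂ) :
    0 ≤ Matrix.trace (X * Xᴴ) := by
  rw [Matrix.trace]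
  refine Finset.sum_nonneg fun i _ => ?_
  simp only [Matrix.diag_apply, Matrix.mul_apply, Matrix.conjTranspose_apply]
  exact Finset.sum_nonneg fun j _ => mul_star_self_nonneg _

lemma trace_mul_conjTranspose_self_eq_zero {n : ℕ} {X : Matrix (Fin n) (Fin n) ℂ}
    (h : Matrix.trace (X * Xᴴ) = 0) : X = 0 := by
  have hterm : ∀ i ∈ Finset.univ, (0:ℂ) ≤ (X * Xᴴ).diag i := by
    intro i _
    simp only [Matrix.diag_apply, Matrix.mul_apply, Matrix.conjTranspose_apply]
    exact Finset.sum_nonneg fun j _ => mul_star_self_nonneg _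
  have h2 := (Finset.sum_eq_zero_iff_of_nonneg hterm).mp h
  ext i j
  have h3 := h2 i (Finset.mem_univ i)
  simp only [Matrix.diag_apply, Matrix.mul_apply, Matrix.conjTranspose_apply] at h3
  have h4 : ∀ k ∈ Finset.univ, (0:ℂ) ≤ X i k * star (X i k) := fun k _ =>
    mul_star_self_nonneg _
  have h5 := (Finset.sum_eq_zero_iff_of_nonneg h4).mp h3 j (Finset.mem_univ j)
  rcases mul_eq_zero.mp h5 with h6 | h6
  · simpa using h6
  · simpa using star_eq_zero.mp h6

lemma dotProduct_sum {ι m : Type*} [Fintype m] (s : Finset ι) (w : m → ℂ) (f : ι → m → ℂ) :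
    dotProduct w (∑ i ∈ s, f i) = ∑ i ∈ s, dotProduct w (f i) := by
  simp only [dotProduct, Finset.sum_apply, Finset.mul_sum]
  exact Finset.sum_comm

lemma charInner_eq_sum (G : Type*) [Group G] [Fintype G] (φ ψ : G → ℂ) :
    charInner G φ ψ = (Fintype.card G : ℂ)⁻¹ * ∑ g, φ g * (starRingEnd ℂ) (ψ g) := by
  rw [charInner, finsum_eq_sum_of_fintype, Nat.card_eq_fintype_card]

lemma core {G : Type*} [Group G] [Finite G] (K : Subgroup G) (hKn : K.Normal)
    {n : ℕ} (ρ : G →* Matrix.GeneralLinearGroup (Fin n) ℂ)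
    {χ : G → ℂ} (hχρ : ∀ g, χ g = Matrix.trace ((ρ g : Matrix (Fin n) (Fin n) ℂ)))
    (hirr : charInner G χ χ = 1)
    {θ : K → ℂ}
    (hθtriv : ∀ k : K, (k : G) ∈ (⁅K, K⁆ : Subgroup G) → θ k = 1)
    (hconj : ∀ k : K, (starRingEnd ℂ) (θ k) = (θ k)⁻¹)
    (hmul : ∀ a b : K, θ (a * b) = θ a * θ b)
    (hone : θ 1 = 1)
    (h1 : charInner K (res K χ) θ ≠ 0) :
    ∀ x ∈ (⁅K, K⁆ : Subgroup G), χ x = χ 1 := by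
  classical
  haveI := Fintype.ofFinite G
  haveI : Fintype K := Fintype.ofFinite K
  haveI := hKn
  intro x hx
  rcases Nat.eq_zero_or_pos n with hn | hn
  · subst hn
    rw [hχρ, hχρ]
    simp [Matrix.trace]
  have hxK : x ∈ K := Subgroup.commutator_le_left K K hx
  set cG : ℂ := (Fintype.card G : ℂ) with hcGdef
  set cK : ℂ := (Fintype.card K : ℂ) with hcKdef
  have hcG : cG ≠ 0 := Nat.cast_ne_zero.mpr Fintype.card_ne_zero
  set R : G → Matrix (Fin n) (Fin n) ℂ := fun g => (ρ g : Matrix (Fin n) (Fin n) ℂ) with hR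
  have Rmul : ∀ g h : G, R (g * h) = R g * R h := by
    intro g h; simp only [hR, _root_.map_mul, Units.val_mul]
  have Rone : R 1 = 1 := by simp only [hR, _root_.map_one, Units.val_one]
  -- the projection-like matrix P
  set P : Matrix (Fin n) (Fin n) ℂ :=
    cK⁻¹ • ∑ k : K, (starRingEnd ℂ) (θ k) • R (k : G) with hPdef
  have hPtr : Matrix.trace P = charInner K (res K χ) θ := by
    rw [charInner_eq_sum, hPdef, Matrix.trace_smul, Matrix.trace_sum]
    rw [smul_eq_mul]
    congr 1
    refine Finset.sum_congr rfl fun k _ => ?_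
    rw [Matrix.trace_smul, smul_eq_mul, res, hχρ]
    ring
  have hP0 : P ≠ 0 := by
    intro h
    exact h1 (by rw [← hPtr, h, Matrix.trace_zero])
  have hθne : ∀ k : K, θ k ≠ 0 := by
    intro k hk
    have := hmul k k⁻¹
    rw [mul_inv_cancel, hone, hk, zero_mul] at this
    exact one_ne_zero this
  have hθinv : ∀ k : K, θ k⁻¹ = (θ k)⁻¹ := by
    intro k
    exact eq_inv_of_mul_eq_one_left (by rw [← hmul, inv_mul_cancel, hone])
  have hkP : ∀ k₀ : K, R (k₀ : G) * P = θ k₀ • P := by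
    intro k₀
    have e1 : R (k₀ : G) * P = cK⁻¹ • ∑ k : K, (starRingEnd ℂ) (θ k) • R ((k₀ : G) * k) := by
      rw [hPdef, mul_smul_comm, Finset.mul_sum]
      congr 1
      exact Finset.sum_congr rfl fun k _ => by rw [mul_smul_comm, Rmul]
    have e2 : ∑ k : K, (starRingEnd ℂ) (θ k) • R ((k₀ : G) * k)
        = ∑ k : K, (starRingEnd ℂ) (θ (k₀⁻¹ * k)) • R (k : G) := by
      rw [← Equiv.sum_comp (Equiv.mulLeft k₀)
        (fun k : K => (starRingEnd ℂ) (θ (k₀⁻¹ * k)) • R (k : G))]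
      refine Finset.sum_congr rfl fun k _ => ?_
      simp only [Equiv.coe_mulLeft, inv_mul_cancel_left, Subgroup.coe_mul]
    have e3 : ∀ k : K, (starRingEnd ℂ) (θ (k₀⁻¹ * k)) = θ k₀ * (starRingEnd ℂ) (θ k) := by
      intro k
      rw [hmul, _root_.map_mul, hθinv, map_inv₀, hconj, inv_inv]
    rw [e1, e2]
    simp only [e3, mul_smul]
    rw [← Finset.smul_sum, smul_comm, hPdef]
  have hxP : ∀ g : G, R x * (R g * P) = R g * P := by
    intro g
    have hgx : g⁻¹ * x * g ∈ K := by
      have := hKn.conj_mem x hxK g⁻¹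
      simpa using this
    have hgx2 : g⁻¹ * x * g ∈ (⁅K, K⁆ : Subgroup G) := by
      have := (Subgroup.commutator_normal K K).conj_mem x hx g⁻¹
      simpa using this
    have hθgx : θ ⟨g⁻¹ * x * g, hgx⟩ = 1 := hθtriv _ hgx2
    have key : R (g⁻¹ * x * g) * P = P := by
      have := hkP ⟨g⁻¹ * x * g, hgx⟩
      rw [hθgx, one_smul] at this
      exact this
    calc R x * (R g * P) = (R x * R g) * P := by rw [mul_assoc]
      _ = R (x * g) * P := by rw [Rmul]
      _ = R (g * (g⁻¹ * x * g)) * P := by congr 2; group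
      _ = R g * (R (g⁻¹ * x * g) * P) := by rw [Rmul, mul_assoc]
      _ = R g * P := by rw [key]
  -- the two fixed matrices S and A
  set S : Matrix (Fin n) (Fin n) ℂ := ∑ g : G, R g * (R g)ᴴ with hSdef
  set A : Matrix (Fin n) (Fin n) ℂ := ∑ g : G, (R g * P) * (R g * P)ᴴ with hAdef
  have key : ∀ W : G → Matrix (Fin n) (Fin n) ℂ, (∀ h g : G, R h * W g = W (h * g)) →
      ∀ h : G, R h * (∑ g : G, W g * (W g)ᴴ) * (R h)ᴴ = ∑ g : G, W g * (W g)ᴴ := by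
    intro W hW h
    have e1 : R h * (∑ g : G, W g * (W g)ᴴ) * (R h)ᴴ = ∑ g : G, W (h * g) * (W (h * g))ᴴ := by
      rw [Finset.mul_sum, Finset.sum_mul]
      refine Finset.sum_congr rfl fun g _ => ?_
      rw [← hW h g, Matrix.conjTranspose_mul]
      noncomm_ring
    rw [e1, ← Equiv.sum_comp (Equiv.mulLeft h) (fun g => W g * (W g)ᴴ)]
    rfl
  have hSfix : ∀ h : G, R h * S * (R h)ᴴ = S := key R (fun h g => (Rmul h g).symm)
  have hAfix : ∀ h : G, R h * A * (R h)ᴴ = A :=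
    key (fun g => R g * P) (fun h g => by rw [← mul_assoc, ← Rmul])
  have htrA : Matrix.trace A ≠ 0 := by
    intro h0
    rw [hAdef, Matrix.trace_sum] at h0
    have hterm : ∀ g ∈ Finset.univ, (0:ℂ) ≤ Matrix.trace ((R g * P) * (R g * P)ᴴ) :=
      fun g _ => trace_mul_conjTranspose_self_nonneg _
    have := (Finset.sum_eq_zero_iff_of_nonneg hterm).mp h0 1 (Finset.mem_univ 1)
    have hP' : R 1 * P = 0 := trace_mul_conjTranspose_self_eq_zero this
    rw [Rone, one_mul] at hP'
    exact hP0 hP'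
  have hRxA : R x * A = A := by
    rw [hAdef, Finset.mul_sum]
    refine Finset.sum_congr rfl fun g _ => ?_
    rw [← mul_assoc, ← mul_assoc]
    congr 1
    rw [mul_assoc]
    exact hxP g
  -- the kronecker representation σ and the averaging matrix T
  set σ : G → Matrix (Fin n × Fin n) (Fin n × Fin n) ℂ :=
    fun g => (R g) ⊗ₖ ((R g).map (starRingEnd ℂ)) with hσdef
  have σmul : ∀ g h : G, σ (g * h) = σ g * σ h := by
    intro g h
    rw [hσdef]
    simp only [Rmul, Matrix.map_mul]
    exact Matrix.mul_kronecker_mul _ _ _ _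
  set T : Matrix (Fin n × Fin n) (Fin n × Fin n) ℂ := cG⁻¹ • ∑ g : G, σ g with hTdef
  have hσT : ∀ h : G, σ h * T = T := by
    intro h
    rw [hTdef, mul_smul_comm, Finset.mul_sum]
    congr 1
    rw [← Equiv.sum_comp (Equiv.mulLeft h) σ]
    exact Finset.sum_congr rfl fun g _ => by rw [← σmul]; rfl
  have htrT : Matrix.trace T = 1 := by
    rw [← hirr, charInner_eq_sum, hTdef, Matrix.trace_smul, Matrix.trace_sum, smul_eq_mul]
    congr 1
    refine Finset.sum_congr rfl fun g _ => ?_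
    rw [hσdef]
    rw [Matrix.trace_kronecker, trace_map_conj, hχρ g]
  -- the fixed space F
  set F : Submodule ℂ (Fin n × Fin n → ℂ) :=
    ⨅ g : G, LinearMap.ker ((Matrix.mulVecLin (σ g)) - LinearMap.id) with hFdef
  have memF : ∀ v, v ∈ F ↔ ∀ g : G, σ g *ᵥ v = v := by
    intro v
    simp [hFdef, Submodule.mem_iInf, LinearMap.mem_ker, LinearMap.sub_apply,
      Matrix.mulVecLin_apply, sub_eq_zero, LinearMap.id_apply]
  have hTv : ∀ v ∈ F, T *ᵥ v = v := by
    intro v hv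
    rw [hTdef, Matrix.smul_mulVec, sum_mulVec]
    have : ∑ g : G, σ g *ᵥ v = (Fintype.card G : ℂ) • v := by
      rw [Finset.sum_congr rfl fun g _ => (memF v).mp hv g]
      rw [Finset.sum_const, Finset.card_univ, ← Nat.cast_smul_eq_nsmul ℂ]
    rw [this, smul_smul, inv_mul_cancel₀ hcG, one_smul]
  have hTmem : ∀ v, T *ᵥ v ∈ F := by
    intro v
    rw [memF]
    intro g
    rw [Matrix.mulVec_mulVec, hσT]
  have htrT' : LinearMap.trace ℂ _ (Matrix.mulVecLin T) = Matrix.trace T := by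
    rw [← Matrix.toLin'_apply', LinearMap.trace_eq_matrix_trace ℂ (Pi.basisFun ℂ (Fin n × Fin n)),
      LinearMap.toMatrix_eq_toMatrix', LinearMap.toMatrix'_toLin']
  have hfinrank : Module.finrank ℂ F = 1 := by
    let f : (Fin n × Fin n → ℂ) →ₗ[ℂ] F := LinearMap.codRestrict F (Matrix.mulVecLin T) hTmem
    have hgf : F.subtype.comp f = Matrix.mulVecLin T := rfl
    have hfg : f.comp F.subtype = LinearMap.id := by
      apply LinearMap.ext
      intro v
      apply Subtype.ext
      exact hTv v.val v.2
    have hc : (Module.finrank ℂ F : ℂ) = 1 := by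
      calc (Module.finrank ℂ F : ℂ) = LinearMap.trace ℂ F LinearMap.id :=
            (LinearMap.trace_id ℂ F).symm
        _ = LinearMap.trace ℂ F (f.comp F.subtype) := by rw [hfg]
        _ = LinearMap.trace ℂ _ (F.subtype.comp f) := (LinearMap.trace_comp_comm' f F.subtype).symm
        _ = Matrix.trace T := by rw [hgf, htrT']
        _ = 1 := htrT
    exact_mod_cast hc
  -- S is injective
  have hSinj : ∀ v : Fin n → ℂ, S *ᵥ v = 0 → v = 0 := by
    intro v hv
    have h0 : dotProduct (star v) (S *ᵥ v) = 0 := by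
      rw [hv, dotProduct_zero]
    rw [hSdef, sum_mulVec] at h0
    have hterm : ∀ g : G, dotProduct (star v) ((R g * (R g)ᴴ) *ᵥ v)
        = dotProduct (star ((R g)ᴴ *ᵥ v)) ((R g)ᴴ *ᵥ v) := by
      intro g
      rw [← Matrix.mulVec_mulVec, Matrix.dotProduct_mulVec, Matrix.star_mulVec,
        Matrix.conjTranspose_conjTranspose]
    rw [dotProduct_sum] at h0
    have h0' : ∑ g : G, dotProduct (star ((R g)ᴴ *ᵥ v)) ((R g)ᴴ *ᵥ v) = 0 :=
      (Finset.sum_congr rfl fun g _ => (hterm g).symm).trans h0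
    have hnn : ∀ g ∈ Finset.univ, (0:ℂ) ≤
        dotProduct (star ((R g)ᴴ *ᵥ v)) ((R g)ᴴ *ᵥ v) :=
      fun g _ => dotProduct_star_self_nonneg _
    have h1' := (Finset.sum_eq_zero_iff_of_nonneg hnn).mp h0' 1 (Finset.mem_univ 1)
    have := dotProduct_star_self_eq_zero.mp h1'
    rw [Rone, Matrix.conjTranspose_one, Matrix.one_mulVec] at this
    exact this
  have hS0 : S ≠ 0 := by
    intro h
    have := hSinj 1 (by rw [h, Matrix.zero_mulVec])
    have := congrFun this ⟨0, hn⟩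
    simp at this
  -- F is spanned by vec S
  have hSF : vec S ∈ F := by
    rw [memF]
    intro g
    rw [hσdef, kron_mulVec, map_conj_transpose, hSfix]
  have hAF : vec A ∈ F := by
    rw [memF]
    intro g
    rw [hσdef, kron_mulVec, map_conj_transpose, hAfix]
  have hvS0 : vec S ≠ 0 := by
    intro h
    exact hS0 (vec_inj (h.trans rfl))
  have hspan : Submodule.span ℂ {vec S} = F := by
    apply Submodule.eq_of_le_of_finrank_le (Submodule.span_le.mpr (by simpa using hSF))
    rw [hfinrank, finrank_span_singleton hvS0]
  obtain ⟨a, ha⟩ := Submodule.mem_span_singleton.mp (hspan ▸ hAF)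
  have hAS : A = a • S := vec_inj (show vec A = vec (a • S) from by rw [← ha]; rfl)
  have ha0 : a ≠ 0 := by
    intro h
    rw [h, zero_smul] at hAS
    exact htrA (by rw [hAS, Matrix.trace_zero])
  have hRxS : R x * S = S := by
    have h' := hRxA
    rw [hAS, mul_smul_comm] at h'
    exact smul_right_injective _ ha0 h'
  have hSsurj : Function.Surjective (Matrix.mulVecLin S) := by
    have hinj : Function.Injective (Matrix.mulVecLin S) := by
      intro u w huw
      have : S *ᵥ (u - w) = 0 := by
        rw [Matrix.mulVec_sub]
        simp only [Matrix.mulVecLin_apply] at huw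
        rw [huw, sub_self]
      have := hSinj _ this
      exact sub_eq_zero.mp this
    exact LinearMap.injective_iff_surjective.mp hinj
  have hRx1 : R x = 1 := by
    have hall : ∀ w : Fin n → ℂ, R x *ᵥ w = w := by
      intro w
      obtain ⟨v, rfl⟩ := hSsurj w
      simp only [Matrix.mulVecLin_apply]
      rw [Matrix.mulVec_mulVec, hRxS]
    have : Matrix.toLin' (R x) = Matrix.toLin' (1 : Matrix (Fin n) (Fin n) ℂ) := by
      apply LinearMap.ext
      intro w
      rw [Matrix.toLin'_apply, Matrix.toLin'_apply, hall, Matrix.one_mulVec]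
    exact Matrix.toLin'.injective this
  rw [hχρ, hχρ]
  show Matrix.trace (R x) = Matrix.trace (R 1)
  rw [hRx1, Rone]

end StmtAux

theorem stmt_2 {G : Type*} [Group G] [Finite G] (K : Subgroup G) (hKn : K.Normal)
    (χ ψ : G → ℂ) (hχ : IsIrrChar G χ) (hψ : IsIrrChar G ψ)
    (θ : K → ℂ) (hθ : IsIrrChar K θ) (hθlin : θ 1 = 1)
    (h1 : charInner K (res K χ) θ ≠ 0)
    (h2 : charInner K (res K (conjChar ψ)) θ ≠ 0) :
    ((⁅K, K⁆ : Subgroup G) : Set G) ⊆ charKer (χ * ψ) := by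
  classical
  obtain ⟨⟨nχ, ρχ, hρχ⟩, hχirr⟩ := hχ
  obtain ⟨⟨nψ, ρψ, hρψ⟩, hψirr⟩ := hψ
  obtain ⟨⟨nθ, ρθ, hρθ⟩, -⟩ := hθ
  -- θ has dimension 1, hence is multiplicative
  have hnθ : nθ = 1 := by
    have h := hρθ 1
    rw [hθlin, _root_.map_one] at h
    have : ((1 : Matrix.GeneralLinearGroup (Fin nθ) ℂ) : Matrix (Fin nθ) (Fin nθ) ℂ) = 1 :=
      Units.val_one
    rw [this, Matrix.trace_one] at h
    have h2 : ((nθ : ℂ)) = 1 := by simpa using h.symm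
    exact_mod_cast h2
  subst hnθ
  have hmul : ∀ a b : K, θ (a * b) = θ a * θ b := by
    intro a b
    rw [hρθ, hρθ, hρθ, _root_.map_mul]
    rw [Units.val_mul]
    simp [Matrix.trace, Matrix.mul_apply, Fin.sum_univ_one]
  have hone : θ 1 = 1 := hθlin
  have hθpow : ∀ (k : K) (m : ℕ), θ (k ^ m) = (θ k) ^ m := by
    intro k m
    induction m with
    | zero => simpa using hone
    | succ m ih => rw [pow_succ, pow_succ, hmul, ih]
  have hθnorm : ∀ k : K, ‖θ k‖ = 1 := by
    intro k
    have hpos : orderOf k ≠ 0 := (orderOf_pos k).ne'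
    have : (θ k) ^ (orderOf k) = 1 := by rw [← hθpow, pow_orderOf_eq_one, hone]
    exact Complex.norm_eq_one_of_pow_eq_one this hpos
  have hθne : ∀ k : K, θ k ≠ 0 := by
    intro k h
    have := hθnorm k
    rw [h, norm_zero] at this
    exact zero_ne_one this
  have hconj : ∀ k : K, (starRingEnd ℂ) (θ k) = (θ k)⁻¹ := by
    intro k
    have hns : Complex.normSq (θ k) = 1 := by
      rw [← Complex.sq_norm, hθnorm k]
      norm_num
    have hmc : (starRingEnd ℂ) (θ k) * θ k = 1 := by
      rw [← Complex.normSq_eq_conj_mul_self, hns, Complex.ofReal_one]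
    exact eq_inv_of_mul_eq_one_left hmc
  -- θ is trivial on the commutator subgroup
  have hθtriv : ∀ k : K, (k : G) ∈ (⁅K, K⁆ : Subgroup G) → θ k = 1 := by
    intro k hk
    let θhat : K →* ℂˣ :=
      { toFun := fun k => Units.mk0 (θ k) (hθne k)
        map_one' := by ext; simp [hone]
        map_mul' := fun a b => by ext; simp [hmul] }
    have hker : (⁅(⊤ : Subgroup K), (⊤ : Subgroup K)⁆ : Subgroup K) ≤ θhat.ker := by
      rw [Subgroup.commutator_le]
      intro a _ b _
      rw [MonoidHom.mem_ker, map_commutatorElement]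
      exact commutatorElement_eq_one_iff_mul_comm.mpr (mul_comm _ _)
    have hmapcomm : Subgroup.map K.subtype ⁅(⊤ : Subgroup K), (⊤ : Subgroup K)⁆
        = (⁅K, K⁆ : Subgroup G) := by
      rw [Subgroup.map_commutator, ← MonoidHom.range_eq_map, Subgroup.range_subtype]
    rw [← hmapcomm] at hk
    obtain ⟨y, hy, hyk⟩ := hk
    have hyk' : y = k := Subtype.ext hyk
    subst hyk'
    have := hker hy
    rw [MonoidHom.mem_ker] at this
    have := congrArg Units.val this
    simpa [θhat] using this
  -- the conjugate character of ψ is a character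
  let cmap : Matrix (Fin nψ) (Fin nψ) ℂ →+* Matrix (Fin nψ) (Fin nψ) ℂ :=
    (starRingEnd ℂ).mapMatrix
  let ρψ' : G →* Matrix.GeneralLinearGroup (Fin nψ) ℂ :=
    (Units.map cmap.toMonoidHom).comp ρψ
  have hρψ' : ∀ g : G, conjChar ψ g
      = Matrix.trace ((ρψ' g : Matrix (Fin nψ) (Fin nψ) ℂ)) := by
    intro g
    rw [conjChar, hρψ]
    rw [← StmtAux.trace_map_conj]
    rfl
  haveI := Fintype.ofFinite G
  have hψ'irr : charInner G (conjChar ψ) (conjChar ψ) = 1 := by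
    rw [StmtAux.charInner_eq_sum] at hψirr ⊢
    have hconj1 := congrArg (starRingEnd ℂ) hψirr
    rw [map_one, map_mul, map_sum, map_inv₀, map_natCast] at hconj1
    rw [← hconj1]
    congr 1
    refine Finset.sum_congr rfl fun g _ => ?_
    rw [map_mul, conjChar]
  have hχconst := StmtAux.core K hKn ρχ hρχ hχirr hθtriv hconj hmul hone h1
  have hψconst := StmtAux.core K hKn ρψ' hρψ' hψ'irr hθtriv hconj hmul hone h2
  intro g hg
  have hg' : g ∈ (⁅K, K⁆ : Subgroup G) := hg
  have hχg := hχconst g hg'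
  have hψg' := hψconst g hg'
  have hψg : ψ g = ψ 1 := by
    rw [conjChar, conjChar] at hψg'
    exact (starRingEnd ℂ).injective hψg'
  show (χ * ψ) g = (χ * ψ) 1
  simp [Pi.mul_apply, hχg, hψg]
end
end

section
/- Let G be a finite group, χ, ψ irreducible characters of G, and suppose α₁ is a linear irreducible constituent of χψ. Then the map β ↦ ᾱ₁·β gives a bijection between the set of distinct irreducible constituents of χψ and the set of distinct irreducible constituents of χχ̄, preserving multiplicities; in particular the number of distinct irreducible constituents of χψ equals that of χχ̄. -/
open scoped BigOperators

noncomputable section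

set_option maxHeartbeats 1000000

namespace CharProofAux

open Matrix
open scoped Kronecker ComplexOrder

variable {G : Type*} [Group G]

/-- The underlying matrix of a `GL` representation. -/
def mval {n : ℕ} (ρ : G →* Matrix.GeneralLinearGroup (Fin n) ℂ) (g : G) :
    Matrix (Fin n) (Fin n) ℂ := (ρ g : Matrix (Fin n) (Fin n) ℂ)

lemma mval_mul {n : ℕ} (ρ : G →* Matrix.GeneralLinearGroup (Fin n) ℂ) (g h : G) :
    mval ρ (g * h) = mval ρ g * mval ρ h := by
  simp [mval]

lemma mval_one {n : ℕ} (ρ : G →* Matrix.GeneralLinearGroup (Fin n) ℂ) :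
    mval ρ 1 = 1 := by simp [mval]

lemma mval_inv_mul {n : ℕ} (ρ : G →* Matrix.GeneralLinearGroup (Fin n) ℂ) (g : G) :
    mval ρ g⁻¹ * mval ρ g = 1 := by
  rw [← mval_mul, inv_mul_cancel, mval_one]

lemma mval_mul_inv {n : ℕ} (ρ : G →* Matrix.GeneralLinearGroup (Fin n) ℂ) (g : G) :
    mval ρ g * mval ρ g⁻¹ = 1 := by
  rw [← mval_mul, mul_inv_cancel, mval_one]

/-- A unitary representation. -/
def IsURep {n : ℕ} (ρ : G →* Matrix.GeneralLinearGroup (Fin n) ℂ) : Prop :=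
  ∀ g : G, star (mval ρ g) * mval ρ g = 1

lemma IsURep.star_mval {n : ℕ} {ρ : G →* Matrix.GeneralLinearGroup (Fin n) ℂ}
    (h : IsURep ρ) (g : G) : star (mval ρ g) = mval ρ g⁻¹ := by
  calc star (mval ρ g) = star (mval ρ g) * (mval ρ g * mval ρ g⁻¹) := by
        rw [mval_mul_inv, mul_one]
    _ = (star (mval ρ g) * mval ρ g) * mval ρ g⁻¹ := by rw [mul_assoc]
    _ = mval ρ g⁻¹ := by rw [h g, one_mul]

lemma IsURep.mval_mul_star {n : ℕ} {ρ : G →* Matrix.GeneralLinearGroup (Fin n) ℂ}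
    (h : IsURep ρ) (g : G) : mval ρ g * star (mval ρ g) = 1 := by
  rw [h.star_mval, mval_mul_inv]

/-- Every character comes from a unitary representation. -/
lemma exists_urep [Fintype G] {χ : G → ℂ} (h : IsChar G χ) :
    ∃ (n : ℕ) (ρ : G →* Matrix.GeneralLinearGroup (Fin n) ℂ),
      IsURep ρ ∧ ∀ g : G, χ g = (mval ρ g).trace := by
  classical
  obtain ⟨n, ρ₀, hρ₀⟩ := h
  set H : Matrix (Fin n) (Fin n) ℂ := ∑ g : G, star (mval ρ₀ g) * mval ρ₀ g with hH
  have hinv : ∀ g : G, star (mval ρ₀ g) * H * mval ρ₀ g = H := by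
    intro g
    calc star (mval ρ₀ g) * H * mval ρ₀ g
        = ∑ h : G, star (mval ρ₀ (h * g)) * mval ρ₀ (h * g) := by
          rw [hH, Finset.mul_sum, Finset.sum_mul]
          refine Finset.sum_congr rfl fun h _ => ?_
          rw [mval_mul, StarMul.star_mul]
          simp [mul_assoc]
      _ = H := by
          rw [hH]
          exact Fintype.sum_bijective (· * g) (Group.mulRight_bijective g) _ _
            (fun h => rfl)
  have hpos : H.PosDef := by
    have h1 : star (mval ρ₀ 1) * mval ρ₀ 1 = (1 : Matrix (Fin n) (Fin n) ℂ) := by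
      rw [mval_one]; simp
    have hsplit : H = star (mval ρ₀ 1) * mval ρ₀ 1 +
        ∑ g ∈ Finset.univ.erase 1, star (mval ρ₀ g) * mval ρ₀ g :=
      (Finset.add_sum_erase _ _ (Finset.mem_univ 1)).symm
    have hpsd : (∑ g ∈ Finset.univ.erase (1 : G),
        star (mval ρ₀ g) * mval ρ₀ g).PosSemidef := by
      refine Finset.sum_induction _ _ (fun a b ha hb => ha.add hb)
        Matrix.PosSemidef.zero ?_
      intro g _
      rw [Matrix.star_eq_conjTranspose]
      exact Matrix.posSemidef_conjTranspose_mul_self _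
    rw [hsplit, h1]
    exact Matrix.PosDef.add_posSemidef Matrix.PosDef.one hpsd
  obtain ⟨B, hBB, hBherm⟩ : ∃ B : Matrix (Fin n) (Fin n) ℂ, B * B = H ∧ star B = B := by
    open scoped MatrixOrder in
    exact ⟨CFC.sqrt H, CFC.sqrt_mul_sqrt_self H hpos.posSemidef.nonneg,
      (CFC.sqrt_nonneg H).isSelfAdjoint⟩
  have hdetH : H.det ≠ 0 := hpos.det_pos.ne'
  have hdetB : B.det ≠ 0 := by
    intro h0
    apply hdetH
    rw [← hBB, Matrix.det_mul, h0, mul_zero]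
  have hBunit : IsUnit B := (Matrix.isUnit_iff_isUnit_det _).2 (isUnit_iff_ne_zero.2 hdetB)
  set u : (Matrix (Fin n) (Fin n) ℂ)ˣ := hBunit.unit with hudef
  have hu : (u : Matrix (Fin n) (Fin n) ℂ) = B := hBunit.unit_spec
  set Bi : Matrix (Fin n) (Fin n) ℂ := ((u⁻¹ : (Matrix (Fin n) (Fin n) ℂ)ˣ) :
    Matrix (Fin n) (Fin n) ℂ) with hBidef
  have hBBi : B * Bi = 1 := by rw [← hu]; exact u.mul_inv
  have hBiB : Bi * B = 1 := by rw [← hu]; exact u.inv_mul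
  have hBistar : star Bi = Bi := by
    have h1 : star Bi * B = 1 := by
      calc star Bi * B = star Bi * star B := by rw [hBherm]
        _ = star (B * Bi) := by rw [StarMul.star_mul]
        _ = 1 := by rw [hBBi, star_one]
    calc star Bi = star Bi * (B * Bi) := by rw [hBBi, mul_one]
      _ = (star Bi * B) * Bi := by rw [mul_assoc]
      _ = Bi := by rw [h1, one_mul]
  refine ⟨n, (MulAut.conj u).toMonoidHom.comp ρ₀, ?_, ?_⟩
  · intro g
    have hm : mval ((MulAut.conj u).toMonoidHom.comp ρ₀) g = B * mval ρ₀ g * Bi := by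
      simp only [mval, MonoidHom.comp_apply, MulEquiv.coe_toMonoidHom, MulAut.conj_apply,
        Units.val_mul, hu]
      rfl
    rw [hm]
    have hstar : star (B * mval ρ₀ g * Bi) = Bi * star (mval ρ₀ g) * B := by
      rw [StarMul.star_mul, StarMul.star_mul, hBistar, hBherm, mul_assoc]
    rw [hstar]
    calc Bi * star (mval ρ₀ g) * B * (B * mval ρ₀ g * Bi)
        = Bi * (star (mval ρ₀ g) * (B * B) * mval ρ₀ g) * Bi := by
          simp only [mul_assoc]
      _ = Bi * (star (mval ρ₀ g) * H * mval ρ₀ g) * Bi := by rw [hBB]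
      _ = Bi * (B * B) * Bi := by rw [hinv, hBB]
      _ = (Bi * B) * (B * Bi) := by simp only [mul_assoc]
      _ = 1 := by rw [hBiB, hBBi, one_mul]
  · intro g
    have hm : mval ((MulAut.conj u).toMonoidHom.comp ρ₀) g = B * mval ρ₀ g * Bi := by
      simp only [mval, MonoidHom.comp_apply, MulEquiv.coe_toMonoidHom, MulAut.conj_apply,
        Units.val_mul, hu]
      rfl
    rw [hm, Matrix.trace_mul_comm (B * mval ρ₀ g) Bi, ← mul_assoc, hBiB, one_mul]
    exact hρ₀ g

/-- conjugate of a character value is the value at the inverse. -/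
lemma conj_char_apply [Fintype G] {χ : G → ℂ} (h : IsChar G χ) (g : G) :
    (starRingEnd ℂ) (χ g) = χ g⁻¹ := by
  obtain ⟨n, ρ, hu, ht⟩ := exists_urep h
  rw [ht, ht, ← hu.star_mval, Matrix.star_eq_conjTranspose, Matrix.trace_conjTranspose]
  rfl

section Schur

variable [Fintype G]

lemma charInner_eq_sum (φ ψ : G → ℂ) :
    charInner G φ ψ = (Fintype.card G : ℂ)⁻¹ * ∑ g : G, φ g * (starRingEnd ℂ) (ψ g) := by
  rw [charInner, finsum_eq_sum_of_fintype, Nat.card_eq_fintype_card]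

variable {n m : ℕ}

/-- Averaging operator. -/
def avg (ρ : G →* Matrix.GeneralLinearGroup (Fin n) ℂ)
    (σ : G →* Matrix.GeneralLinearGroup (Fin m) ℂ) :
    Matrix (Fin n) (Fin m) ℂ →ₗ[ℂ] Matrix (Fin n) (Fin m) ℂ where
  toFun A := (Fintype.card G : ℂ)⁻¹ • ∑ g : G, mval ρ g * A * (mval σ g)ᴴ
  map_add' A B := by
    rw [← smul_add, ← Finset.sum_add_distrib]
    refine congrArg _ (Finset.sum_congr rfl fun g _ => ?_)
    rw [Matrix.mul_add, Matrix.add_mul]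
  map_smul' c A := by
    simp only [RingHom.id_apply]
    have : ∑ g : G, mval ρ g * (c • A) * (mval σ g)ᴴ =
        c • ∑ g : G, mval ρ g * A * (mval σ g)ᴴ := by
      rw [Finset.smul_sum]
      exact Finset.sum_congr rfl fun g _ => by rw [Matrix.mul_smul, Matrix.smul_mul]
    rw [this, smul_comm]

lemma avg_apply (ρ : G →* Matrix.GeneralLinearGroup (Fin n) ℂ)
    (σ : G →* Matrix.GeneralLinearGroup (Fin m) ℂ) (A : Matrix (Fin n) (Fin m) ℂ) :
    avg ρ σ A = (Fintype.card G : ℂ)⁻¹ • ∑ g : G, mval ρ g * A * (mval σ g)ᴴ := rfl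

lemma conjT_mval {n' : ℕ} {ρ : G →* Matrix.GeneralLinearGroup (Fin n') ℂ}
    (h : IsURep ρ) (g : G) : (mval ρ g)ᴴ = mval ρ g⁻¹ := by
  rw [← Matrix.star_eq_conjTranspose]; exact h.star_mval g

lemma mval_mul_conjT {n' : ℕ} {ρ : G →* Matrix.GeneralLinearGroup (Fin n') ℂ}
    (h : IsURep ρ) (g : G) : mval ρ g * (mval ρ g)ᴴ = 1 := by
  rw [← Matrix.star_eq_conjTranspose]; exact h.mval_mul_star g

lemma avg_intertwine {ρ : G →* Matrix.GeneralLinearGroup (Fin n) ℂ}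
    {σ : G →* Matrix.GeneralLinearGroup (Fin m) ℂ} (hσ : IsURep σ)
    (A : Matrix (Fin n) (Fin m) ℂ) (h : G) :
    mval ρ h * avg ρ σ A = avg ρ σ A * mval σ h := by
  rw [avg_apply, Matrix.mul_smul, Matrix.smul_mul]
  congr 1
  rw [Matrix.mul_sum, Matrix.sum_mul]
  have key : ∀ g : G, mval ρ h * (mval ρ g * A * (mval σ g)ᴴ) =
      mval ρ (h * g) * A * (mval σ (h⁻¹ * (h * g)))ᴴ := by
    intro g
    rw [inv_mul_cancel_left, mval_mul]
    simp [Matrix.mul_assoc]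
  rw [Finset.sum_congr rfl fun g _ => key g]
  have reidx : ∑ g : G, mval ρ (h * g) * A * (mval σ (h⁻¹ * (h * g)))ᴴ =
      ∑ g : G, mval ρ g * A * (mval σ (h⁻¹ * g))ᴴ :=
    Fintype.sum_bijective (h * ·) (Group.mulLeft_bijective h) _ _ (fun g => rfl)
  rw [reidx]
  refine Finset.sum_congr rfl fun g _ => ?_
  rw [mval_mul, Matrix.conjTranspose_mul, conjT_mval hσ h⁻¹, inv_inv]
  simp [Matrix.mul_assoc]

lemma avg_fixed {ρ : G →* Matrix.GeneralLinearGroup (Fin n) ℂ}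
    {σ : G →* Matrix.GeneralLinearGroup (Fin m) ℂ} (hσ : IsURep σ)
    {T : Matrix (Fin n) (Fin m) ℂ} (hT : ∀ g : G, mval ρ g * T = T * mval σ g) :
    avg ρ σ T = T := by
  rw [avg_apply]
  have hterm : ∀ g : G, mval ρ g * T * (mval σ g)ᴴ = T := by
    intro g
    rw [hT g, Matrix.mul_assoc, mval_mul_conjT hσ, Matrix.mul_one]
  rw [Finset.sum_congr rfl fun g _ => hterm g, Finset.sum_const, Finset.card_univ,
    ← Nat.cast_smul_eq_nsmul ℂ, smul_smul,
    inv_mul_cancel₀ (Nat.cast_ne_zero.mpr Fintype.card_ne_zero), one_smul]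

/-- The space of intertwiners. -/
def homSub (ρ : G →* Matrix.GeneralLinearGroup (Fin n) ℂ)
    (σ : G →* Matrix.GeneralLinearGroup (Fin m) ℂ) :
    Submodule ℂ (Matrix (Fin n) (Fin m) ℂ) where
  carrier := {T | ∀ g : G, mval ρ g * T = T * mval σ g}
  add_mem' := by
    intro a b ha hb g
    rw [Matrix.mul_add, Matrix.add_mul, ha g, hb g]
  zero_mem' := by intro g; rw [Matrix.mul_zero, Matrix.zero_mul]
  smul_mem' := by
    intro c a ha g
    rw [Matrix.mul_smul, Matrix.smul_mul, ha g]

lemma mul_std_mul (A : Matrix (Fin n) (Fin n) ℂ) (B : Matrix (Fin m) (Fin m) ℂ)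
    (i k : Fin n) (j l : Fin m) :
    (A * Matrix.single i j (1 : ℂ) * B) k l = A k i * B j l := by
  rw [Matrix.mul_assoc]
  have h1 : ∀ p q, (Matrix.single i j (1 : ℂ) * B) p q =
      if p = i then B j q else 0 := by
    intro p q
    rw [Matrix.mul_apply]
    by_cases hp : p = i
    · subst hp
      simp [Matrix.single, ite_mul, Finset.sum_ite_eq]
    · rw [if_neg hp]
      refine Finset.sum_eq_zero fun x _ => ?_
      simp only [Matrix.single, Matrix.of_apply, ite_mul, one_mul, zero_mul]
      rw [if_neg]
      rintro ⟨h1, -⟩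
      exact hp h1.symm
  rw [Matrix.mul_apply]
  simp only [h1, mul_ite, mul_zero, mul_one]
  rw [Finset.sum_ite_eq' Finset.univ i (fun p => A k p * B j l)]
  simp

lemma stdBasis_repr_apply (M : Matrix (Fin n) (Fin m) ℂ) (p : Fin n × Fin m) :
    (Matrix.stdBasis ℂ (Fin n) (Fin m)).repr M p = M p.1 p.2 := by
  simp [Matrix.stdBasis, Module.Basis.repr_reindex, Pi.basis_repr]

lemma sum_avg_diag {χ θ : G → ℂ} {ρ : G →* Matrix.GeneralLinearGroup (Fin n) ℂ}
    {σ : G →* Matrix.GeneralLinearGroup (Fin m) ℂ}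
    (hρt : ∀ g : G, χ g = (mval ρ g).trace) (hσt : ∀ g : G, θ g = (mval σ g).trace) :
    ∑ p : Fin n × Fin m,
      (avg ρ σ (Matrix.single p.1 p.2 (1 : ℂ))) p.1 p.2 = charInner G χ θ := by
  have hentry : ∀ p : Fin n × Fin m,
      (avg ρ σ (Matrix.single p.1 p.2 (1 : ℂ))) p.1 p.2 =
      (Fintype.card G : ℂ)⁻¹ * ∑ g : G, (mval ρ g) p.1 p.1 * ((mval σ g)ᴴ) p.2 p.2 := by
    intro p
    rw [avg_apply, Matrix.smul_apply, Matrix.sum_apply, smul_eq_mul]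
    congr 1
    exact Finset.sum_congr rfl fun g _ => mul_std_mul _ _ _ _ _ _
  rw [Finset.sum_congr rfl fun p _ => hentry p, charInner_eq_sum, ← Finset.mul_sum]
  congr 1
  rw [Finset.sum_comm]
  refine Finset.sum_congr rfl fun g _ => ?_
  have hprod : ∑ p : Fin n × Fin m, (mval ρ g) p.1 p.1 * ((mval σ g)ᴴ) p.2 p.2 =
      (∑ i : Fin n, (mval ρ g) i i) * (∑ j : Fin m, ((mval σ g)ᴴ) j j) := by
    rw [Fintype.sum_prod_type]
    exact (Finset.sum_mul_sum Finset.univ Finset.univ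
      (fun i => (mval ρ g) i i) (fun j => ((mval σ g)ᴴ) j j)).symm
  rw [hprod]
  have htr : ∑ j : Fin m, ((mval σ g)ᴴ) j j = (starRingEnd ℂ) (θ g) := by
    rw [hσt g]
    have h2 : ((mval σ g)ᴴ).trace = star ((mval σ g).trace) :=
      Matrix.trace_conjTranspose _
    simpa [Matrix.trace, Matrix.diag] using h2
  rw [htr, hρt g]
  rfl

lemma trace_avg {χ θ : G → ℂ} {ρ : G →* Matrix.GeneralLinearGroup (Fin n) ℂ}
    {σ : G →* Matrix.GeneralLinearGroup (Fin m) ℂ}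
    (hρt : ∀ g : G, χ g = (mval ρ g).trace) (hσt : ∀ g : G, θ g = (mval σ g).trace) :
    LinearMap.trace ℂ _ (avg ρ σ) = charInner G χ θ := by
  rw [LinearMap.trace_eq_matrix_trace ℂ (Matrix.stdBasis ℂ (Fin n) (Fin m)),
    ← sum_avg_diag hρt hσt, Matrix.trace]
  refine Finset.sum_congr rfl fun p _ => ?_
  rw [Matrix.diag_apply, LinearMap.toMatrix_apply, Matrix.stdBasis_eq_single,
    stdBasis_repr_apply]

lemma finrank_homSub_eq_one {χ : G → ℂ} {ρ : G →* Matrix.GeneralLinearGroup (Fin n) ℂ}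
    (hρ : IsURep ρ) (hρt : ∀ g : G, χ g = (mval ρ g).trace)
    (h1 : charInner G χ χ = 1) :
    Module.finrank ℂ (homSub ρ ρ) = 1 := by
  have hproj : LinearMap.IsProj (homSub ρ ρ) (avg ρ ρ) := by
    constructor
    · intro A g
      exact avg_intertwine hρ A g
    · intro T hT
      exact avg_fixed hρ hT
  have htr := hproj.trace
  rw [trace_avg hρt hρt, h1] at htr
  exact_mod_cast htr.symm

lemma homSub_scalar {ρ : G →* Matrix.GeneralLinearGroup (Fin n) ℂ} (hn : n ≠ 0)
    (hfr : Module.finrank ℂ (homSub ρ ρ) = 1) {X : Matrix (Fin n) (Fin n) ℂ}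
    (hX : X ∈ homSub ρ ρ) : ∃ c : ℂ, X = c • (1 : Matrix (Fin n) (Fin n) ℂ) := by
  have h1m : (1 : Matrix (Fin n) (Fin n) ℂ) ∈ homSub ρ ρ := by
    intro g; rw [Matrix.mul_one, Matrix.one_mul]
  have hone : (1 : Matrix (Fin n) (Fin n) ℂ) ≠ 0 := by
    intro h0
    have := congrFun (congrFun h0 ⟨0, Nat.pos_of_ne_zero hn⟩) ⟨0, Nat.pos_of_ne_zero hn⟩
    simp [Matrix.one_apply] at this
  have hnz : (⟨1, h1m⟩ : homSub ρ ρ) ≠ 0 := by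
    intro hcon
    exact hone (by simpa using congrArg Subtype.val hcon)
  obtain ⟨c, hc⟩ := (finrank_eq_one_iff_of_nonzero' _ hnz).mp hfr ⟨X, hX⟩
  refine ⟨c, ?_⟩
  have := congrArg Subtype.val hc
  simpa using this.symm

lemma trace_mul_star_ne {T : Matrix (Fin n) (Fin m) ℂ} (hT : T ≠ 0) :
    (T * Tᴴ).trace ≠ 0 := by
  have hform : (T * Tᴴ).trace = ((∑ i : Fin n, ∑ j : Fin m,
      Complex.normSq (T i j) : ℝ) : ℂ) := by
    rw [Matrix.trace]
    push_cast
    refine Finset.sum_congr rfl fun i _ => ?_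
    rw [Matrix.diag_apply, Matrix.mul_apply]
    refine Finset.sum_congr rfl fun j _ => ?_
    rw [Matrix.conjTranspose_apply]
    exact Complex.mul_conj (T i j)
  rw [hform, Ne, Complex.ofReal_eq_zero]
  intro h0
  apply hT
  have hnn : ∀ i ∈ (Finset.univ : Finset (Fin n)),
      (0:ℝ) ≤ ∑ j : Fin m, Complex.normSq (T i j) :=
    fun i _ => Finset.sum_nonneg fun j _ => Complex.normSq_nonneg _
  ext i j
  have hi := (Finset.sum_eq_zero_iff_of_nonneg hnn).mp h0 i (Finset.mem_univ i)
  have hij := (Finset.sum_eq_zero_iff_of_nonneg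
    (fun j _ => Complex.normSq_nonneg (T i j))).mp hi j (Finset.mem_univ j)
  simpa using Complex.normSq_eq_zero.mp hij

lemma char_zero_of_dim_zero {χ : G → ℂ} {ρ : G →* Matrix.GeneralLinearGroup (Fin 0) ℂ}
    (hρt : ∀ g : G, χ g = (mval ρ g).trace) : ∀ g : G, χ g = 0 := by
  intro g
  rw [hρt g, Matrix.trace]
  exact Finset.sum_of_isEmpty _

/-- Orthogonality: two irreducible characters with nonzero inner product are equal. -/
lemma schur {χ θ : G → ℂ} (hχ : IsChar G χ) (hθ : IsChar G θ)
    (h1 : charInner G χ χ = 1) (h2 : charInner G θ θ = 1)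
    (hne : charInner G χ θ ≠ 0) : χ = θ := by
  obtain ⟨n, ρ, hρu, hρt⟩ := exists_urep hχ
  obtain ⟨m, σ, hσu, hσt⟩ := exists_urep hθ
  have hn : n ≠ 0 := by
    rintro rfl
    have hz := char_zero_of_dim_zero hρt
    rw [charInner_eq_sum] at h1
    simp only [hz, zero_mul, Finset.sum_const_zero, mul_zero] at h1
    exact zero_ne_one h1
  have hm : m ≠ 0 := by
    rintro rfl
    have hz := char_zero_of_dim_zero hσt
    rw [charInner_eq_sum] at h2
    simp only [hz, zero_mul, Finset.sum_const_zero, mul_zero] at h2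
    exact zero_ne_one h2
  have hsum := sum_avg_diag (ρ := ρ) (σ := σ) hρt hσt
  have hex : ∃ p : Fin n × Fin m,
      (avg ρ σ (Matrix.single p.1 p.2 (1:ℂ))) p.1 p.2 ≠ 0 := by
    by_contra hall
    push_neg at hall
    rw [← hsum] at hne
    exact hne (Finset.sum_eq_zero fun p _ => hall p)
  obtain ⟨p, hp⟩ := hex
  set T : Matrix (Fin n) (Fin m) ℂ := avg ρ σ (Matrix.single p.1 p.2 (1:ℂ)) with hTdef
  have hT0 : T ≠ 0 := fun h0 => hp (by rw [h0]; rfl)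
  have hTint : ∀ g : G, mval ρ g * T = T * mval σ g :=
    fun g => avg_intertwine hσu _ g
  have hsTint : ∀ g : G, mval σ g * Tᴴ = Tᴴ * mval ρ g := by
    intro g
    have hc := congrArg Matrix.conjTranspose (hTint g⁻¹)
    rw [Matrix.conjTranspose_mul, Matrix.conjTranspose_mul, conjT_mval hρu,
      conjT_mval hσu, inv_inv] at hc
    exact hc.symm
  have hTsT : T * Tᴴ ∈ homSub ρ ρ := by
    intro g
    calc mval ρ g * (T * Tᴴ) = (mval ρ g * T) * Tᴴ := by rw [Matrix.mul_assoc]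
      _ = T * (mval σ g * Tᴴ) := by rw [hTint g, Matrix.mul_assoc]
      _ = T * (Tᴴ * mval ρ g) := by rw [hsTint g]
      _ = (T * Tᴴ) * mval ρ g := by rw [Matrix.mul_assoc]
  have hsTT : Tᴴ * T ∈ homSub σ σ := by
    intro g
    calc mval σ g * (Tᴴ * T) = (mval σ g * Tᴴ) * T := by rw [Matrix.mul_assoc]
      _ = Tᴴ * (mval ρ g * T) := by rw [hsTint g, Matrix.mul_assoc]
      _ = Tᴴ * (T * mval σ g) := by rw [hTint g]
      _ = (Tᴴ * T) * mval σ g := by rw [Matrix.mul_assoc]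
  obtain ⟨lam, hlam⟩ := homSub_scalar hn (finrank_homSub_eq_one hρu hρt h1) hTsT
  obtain ⟨mu, hmu⟩ := homSub_scalar hm (finrank_homSub_eq_one hσu hσt h2) hsTT
  have htr1 : (T * Tᴴ).trace = lam * n := by
    rw [hlam, Matrix.trace_smul, Matrix.trace_one, smul_eq_mul, Fintype.card_fin]
  have htr2 : (Tᴴ * T).trace = mu * m := by
    rw [hmu, Matrix.trace_smul, Matrix.trace_one, smul_eq_mul, Fintype.card_fin]
  have htreq : lam * n = mu * m := by
    rw [← htr1, ← htr2, Matrix.trace_mul_comm]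
  have hlamne : lam * (n : ℂ) ≠ 0 := by rw [← htr1]; exact trace_mul_star_ne hT0
  have hmune : mu ≠ 0 := by
    intro h0
    rw [htreq, h0, zero_mul] at hlamne
    exact hlamne rfl
  have hpt : ∀ g : G, mu * θ g = lam * χ g := by
    intro g
    have e1 : (Tᴴ * T) * mval σ g = Tᴴ * (mval ρ g * T) := by
      rw [Matrix.mul_assoc, hTint g]
    have e2 : ((Tᴴ * T) * mval σ g).trace = mu * θ g := by
      rw [hmu, Matrix.smul_mul, Matrix.trace_smul, Matrix.one_mul, smul_eq_mul, hσt g]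
    have e3 : (Tᴴ * (mval ρ g * T)).trace = lam * χ g := by
      rw [Matrix.trace_mul_comm, Matrix.mul_assoc, hlam, Matrix.mul_smul,
        Matrix.mul_one, Matrix.trace_smul, smul_eq_mul, hρt g]
    rw [← e2, e1, e3]
  have hθχ : ∀ g : G, θ g = (lam * mu⁻¹) * χ g := by
    intro g
    calc θ g = mu⁻¹ * (mu * θ g) := by
          rw [← mul_assoc, inv_mul_cancel₀ hmune, one_mul]
      _ = mu⁻¹ * (lam * χ g) := by rw [hpt g]
      _ = (lam * mu⁻¹) * χ g := by ring
  set r : ℂ := lam * mu⁻¹ with hrdef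
  have hrr : r * (starRingEnd ℂ) r = 1 := by
    have hcc : charInner G θ θ = r * (starRingEnd ℂ) r * charInner G χ χ := by
      rw [charInner_eq_sum, charInner_eq_sum]
      have : ∀ g : G, θ g * (starRingEnd ℂ) (θ g) =
          r * (starRingEnd ℂ) r * (χ g * (starRingEnd ℂ) (χ g)) := by
        intro g
        simp only [hθχ g, _root_.map_mul]
        ring
      rw [Finset.sum_congr rfl fun g _ => this g, ← Finset.mul_sum]
      ring
    rw [h2, h1, mul_one] at hcc
    exact hcc.symm
  have hrn : r * (n : ℂ) = (m : ℂ) := by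
    have e : r * (n : ℂ) = mu⁻¹ * (lam * n) := by rw [hrdef]; ring
    rw [htreq, ← mul_assoc, inv_mul_cancel₀ hmune, one_mul] at e
    exact e
  have hconj : (starRingEnd ℂ) r = r := by
    have hnne : ((n : ℕ) : ℂ) ≠ 0 := Nat.cast_ne_zero.mpr hn
    have : r = (m : ℂ) / (n : ℂ) := (eq_div_iff hnne).mpr hrn
    rw [this, map_div₀, map_natCast, map_natCast]
  rw [hconj] at hrr
  have hre : r = 1 := by
    rcases mul_self_eq_one_iff.mp hrr with h | h
    · exact h
    · exfalso
      rw [h] at hrn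
      have : ((m + n : ℕ) : ℂ) = 0 := by push_cast; linear_combination -hrn
      have hmn : m + n = 0 := Nat.cast_eq_zero.mp this
      exact hn (Nat.eq_zero_of_add_eq_zero_left hmn)
  funext g
  rw [hθχ g, hre, one_mul]

end Schur

section Chars

variable [Fintype G]

lemma charInner_congr_term (φ₁ ψ₁ φ₂ ψ₂ : G → ℂ)
    (h : ∀ g : G, φ₁ g * (starRingEnd ℂ) (ψ₁ g) = φ₂ g * (starRingEnd ℂ) (ψ₂ g)) :
    charInner G φ₁ ψ₁ = charInner G φ₂ ψ₂ := by
  rw [charInner_eq_sum, charInner_eq_sum]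
  exact congrArg _ (Finset.sum_congr rfl fun g _ => h g)

lemma trace_reindex {k l : Type*} [Fintype k] [Fintype l] (e : k ≃ l) (M : Matrix k k ℂ) :
    ((Matrix.reindex e e) M).trace = M.trace := by
  rw [Matrix.reindex_apply, Matrix.trace, Matrix.trace]
  exact Fintype.sum_bijective e.symm e.symm.bijective _ _ (fun i => rfl)

lemma isChar_mul {χ ψ : G → ℂ} (hχ : IsChar G χ) (hψ : IsChar G ψ) :
    IsChar G (χ * ψ) := by
  classical
  obtain ⟨n, ρ, hρ₀⟩ := hχ
  obtain ⟨m, σ, hσ₀⟩ := hψ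
  have hρ : ∀ g : G, χ g = (mval ρ g).trace := hρ₀
  have hσ : ∀ g : G, ψ g = (mval σ g).trace := hσ₀
  let f : G →* Matrix (Fin (n * m)) (Fin (n * m)) ℂ :=
  { toFun := fun g => Matrix.reindexAlgEquiv ℂ ℂ finProdFinEquiv
      (Matrix.kroneckerMap (· * ·) (mval ρ g) (mval σ g)),
    map_one' := by
      show Matrix.reindexAlgEquiv ℂ ℂ finProdFinEquiv
        (Matrix.kroneckerMap (· * ·) (mval ρ 1) (mval σ 1)) = 1
      rw [mval_one, mval_one, Matrix.one_kronecker_one]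
      exact map_one (Matrix.reindexAlgEquiv ℂ ℂ finProdFinEquiv)
    map_mul' := by
      intro a b
      show Matrix.reindexAlgEquiv ℂ ℂ finProdFinEquiv
          (Matrix.kroneckerMap (· * ·) (mval ρ (a * b)) (mval σ (a * b))) =
        Matrix.reindexAlgEquiv ℂ ℂ finProdFinEquiv
          (Matrix.kroneckerMap (· * ·) (mval ρ a) (mval σ a)) *
        Matrix.reindexAlgEquiv ℂ ℂ finProdFinEquiv
          (Matrix.kroneckerMap (· * ·) (mval ρ b) (mval σ b))
      rw [mval_mul, mval_mul, Matrix.mul_kronecker_mul]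
      exact map_mul (Matrix.reindexAlgEquiv ℂ ℂ finProdFinEquiv) _ _ }
  refine ⟨n * m, f.toHomUnits, fun g => ?_⟩
  have hcoe : ((f.toHomUnits g : Matrix (Fin (n*m)) (Fin (n*m)) ℂ)) = f g :=
    f.coe_toHomUnits g
  rw [Pi.mul_apply, hρ g, hσ g, hcoe]
  show _ = (Matrix.reindexAlgEquiv ℂ ℂ finProdFinEquiv
      (Matrix.kroneckerMap (· * ·) (mval ρ g) (mval σ g))).trace
  rw [Matrix.reindexAlgEquiv_apply, trace_reindex, Matrix.trace_kronecker]

lemma isChar_conj {χ : G → ℂ} (hχ : IsChar G χ) : IsChar G (conjChar χ) := by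
  classical
  obtain ⟨n, ρ, hρ₀⟩ := hχ
  have hρ : ∀ g : G, χ g = (mval ρ g).trace := hρ₀
  let f : G →* Matrix (Fin n) (Fin n) ℂ :=
  { toFun := fun g => (mval ρ g).map (starRingEnd ℂ),
    map_one' := by
      show (mval ρ 1).map (starRingEnd ℂ) = 1
      rw [mval_one]; exact Matrix.map_one _ (map_zero _) (map_one _),
    map_mul' := by
      intro a b
      show (mval ρ (a * b)).map (starRingEnd ℂ) =
        (mval ρ a).map (starRingEnd ℂ) * (mval ρ b).map (starRingEnd ℂ)
      rw [mval_mul]; exact Matrix.map_mul }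
  refine ⟨n, f.toHomUnits, fun g => ?_⟩
  have hcoe : ((f.toHomUnits g : Matrix (Fin n) (Fin n) ℂ)) = f g :=
    f.coe_toHomUnits g
  rw [hcoe]
  show conjChar χ g = ((mval ρ g).map (starRingEnd ℂ)).trace
  rw [conjChar, hρ g, Matrix.trace, Matrix.trace, map_sum]
  exact Finset.sum_congr rfl fun i _ => rfl

lemma linear_mul {α : G → ℂ} (hα : IsChar G α) (h1 : α 1 = 1) (g h : G) :
    α (g * h) = α g * α h := by
  obtain ⟨n, ρ, hρ₀⟩ := hα
  have hρ : ∀ g : G, α g = (mval ρ g).trace := hρ₀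
  have hn : n = 1 := by
    have := hρ 1
    rw [h1] at this
    have h2 : ((mval ρ 1).trace : ℂ) = n := by
      rw [mval_one, Matrix.trace_one, Fintype.card_fin]
    rw [← this] at h2
    exact_mod_cast h2.symm
  subst hn
  rw [hρ (g * h), hρ g, hρ h, Matrix.trace_fin_one, Matrix.trace_fin_one,
    Matrix.trace_fin_one, mval_mul, Matrix.mul_apply]
  simp

lemma linear_conj_mul_self {α : G → ℂ} (hα : IsChar G α) (h1 : α 1 = 1) (g : G) :
    (starRingEnd ℂ) (α g) * α g = 1 := by
  have hmul : ∀ a b : G, α (a * b) = α a * α b := linear_mul hα h1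
  let φ : G →* ℂ := { toFun := α, map_one' := h1, map_mul' := hmul }
  have hpow : α g ^ orderOf g = 1 := by
    have h' : φ (g ^ orderOf g) = φ g ^ orderOf g := map_pow φ g _
    rw [pow_orderOf_eq_one, _root_.map_one] at h'
    exact h'.symm
  have hord : orderOf g ≠ 0 := (orderOf_pos g).ne'
  have hnorm : ‖α g‖ = 1 := Complex.norm_eq_one_of_pow_eq_one hpow hord
  rw [mul_comm, Complex.mul_conj, Complex.normSq_eq_norm_sq, hnorm]
  norm_num

lemma linear_conj_ne_zero {α : G → ℂ} (hα : IsChar G α) (h1 : α 1 = 1) (g : G) :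
    (starRingEnd ℂ) (α g) ≠ 0 :=
  left_ne_zero_of_mul_eq_one (linear_conj_mul_self hα h1 g)

end Chars

end CharProofAux

theorem stmt_4 {G : Type*} [Group G] [Finite G] (χ ψ α₁ : G → ℂ)
    (hχ : IsIrrChar G χ) (hψ : IsIrrChar G ψ) (hα : IsIrrChar G α₁)
    (hαlin : α₁ 1 = 1) (hcon : charInner G (χ * ψ) α₁ ≠ 0) :
    Set.BijOn (fun β => conjChar α₁ * β)
      {β | IsIrrChar G β ∧ charInner G (χ * ψ) β ≠ 0}
      {γ | IsIrrChar G γ ∧ charInner G (χ * conjChar χ) γ ≠ 0} ∧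
    (∀ β : G → ℂ, charInner G (χ * ψ) β = charInner G (χ * conjChar χ) (conjChar α₁ * β)) ∧
    {β | IsIrrChar G β ∧ charInner G (χ * ψ) β ≠ 0}.ncard =
      {γ | IsIrrChar G γ ∧ charInner G (χ * conjChar χ) γ ≠ 0}.ncard := by
  classical
  cases nonempty_fintype G
  obtain ⟨hχc, hχ1⟩ := hχ
  obtain ⟨hψc, hψ1⟩ := hψ
  obtain ⟨hαc, _hα1⟩ := hα
  have hαu : ∀ g : G, (starRingEnd ℂ) (α₁ g) * α₁ g = 1 :=
    fun g => CharProofAux.linear_conj_mul_self hαc hαlin g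
  have hθc : IsChar G (α₁ * conjChar ψ) :=
    CharProofAux.isChar_mul hαc (CharProofAux.isChar_conj hψc)
  have hθθ : charInner G (α₁ * conjChar ψ) (α₁ * conjChar ψ) = 1 := by
    rw [← hψ1]
    refine CharProofAux.charInner_congr_term _ _ _ _ (fun g => ?_)
    simp only [Pi.mul_apply, conjChar, map_mul, Complex.conj_conj]
    linear_combination (ψ g * (starRingEnd ℂ) (ψ g)) * hαu g
  have hχθ : charInner G χ (α₁ * conjChar ψ) ≠ 0 := by
    have he : charInner G χ (α₁ * conjChar ψ) = charInner G (χ * ψ) α₁ := by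
      refine CharProofAux.charInner_congr_term _ _ _ _ (fun g => ?_)
      simp only [Pi.mul_apply, conjChar, map_mul, Complex.conj_conj]
      ring
    rw [he]; exact hcon
  have hkey0 : χ = α₁ * conjChar ψ :=
    CharProofAux.schur hχc hθc hχ1 hθθ hχθ
  have key : ∀ g : G, χ g * ψ g = α₁ g * (χ g * (starRingEnd ℂ) (χ g)) := by
    intro g
    have h := congrFun hkey0 g
    simp only [Pi.mul_apply, conjChar] at h
    have hc : (starRingEnd ℂ) (χ g) = (starRingEnd ℂ) (α₁ g) * ψ g := by
      rw [h, map_mul, Complex.conj_conj]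
    rw [hc]
    linear_combination (- (χ g * ψ g)) * hαu g
  have middle : ∀ β : G → ℂ,
      charInner G (χ * ψ) β = charInner G (χ * conjChar χ) (conjChar α₁ * β) := by
    intro β
    refine CharProofAux.charInner_congr_term _ _ _ _ (fun g => ?_)
    simp only [Pi.mul_apply, conjChar, map_mul, Complex.conj_conj]
    linear_combination ((starRingEnd ℂ) (β g)) * key g
  have mem1 : ∀ β : G → ℂ, IsIrrChar G β → IsIrrChar G (conjChar α₁ * β) := by
    intro β hβ
    obtain ⟨hβc, hβ1⟩ := hβ
    refine ⟨CharProofAux.isChar_mul (CharProofAux.isChar_conj hαc) hβc, ?_⟩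
    rw [← hβ1]
    refine CharProofAux.charInner_congr_term _ _ _ _ (fun g => ?_)
    simp only [Pi.mul_apply, conjChar, map_mul, Complex.conj_conj]
    linear_combination (β g * (starRingEnd ℂ) (β g)) * hαu g
  have mem2 : ∀ γ : G → ℂ, IsIrrChar G γ → IsIrrChar G (α₁ * γ) := by
    intro γ hγ
    obtain ⟨hγc, hγ1⟩ := hγ
    refine ⟨CharProofAux.isChar_mul hαc hγc, ?_⟩
    rw [← hγ1]
    refine CharProofAux.charInner_congr_term _ _ _ _ (fun g => ?_)
    simp only [Pi.mul_apply, map_mul]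
    linear_combination (γ g * (starRingEnd ℂ) (γ g)) * hαu g
  have hcancel : ∀ γ : G → ℂ, conjChar α₁ * (α₁ * γ) = γ := by
    intro γ; funext g
    simp only [Pi.mul_apply, conjChar]
    calc (starRingEnd ℂ) (α₁ g) * (α₁ g * γ g)
        = ((starRingEnd ℂ) (α₁ g) * α₁ g) * γ g := by ring
      _ = γ g := by rw [hαu g, one_mul]
  have hinj : Function.Injective (fun β : G → ℂ => conjChar α₁ * β) := by
    intro β β' h
    funext g
    have hg := congrFun h g
    simp only [Pi.mul_apply, conjChar] at hg
    exact mul_left_cancel₀ (CharProofAux.linear_conj_ne_zero hαc hαlin g) hg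
  have hmaps : Set.MapsTo (fun β => conjChar α₁ * β)
      {β | IsIrrChar G β ∧ charInner G (χ * ψ) β ≠ 0}
      {γ | IsIrrChar G γ ∧ charInner G (χ * conjChar χ) γ ≠ 0} := by
    intro β hβ
    exact ⟨mem1 β hβ.1, by rw [← middle β]; exact hβ.2⟩
  have hsurj : Set.SurjOn (fun β => conjChar α₁ * β)
      {β | IsIrrChar G β ∧ charInner G (χ * ψ) β ≠ 0}
      {γ | IsIrrChar G γ ∧ charInner G (χ * conjChar χ) γ ≠ 0} := by
    intro γ hγ
    refine ⟨α₁ * γ, ⟨mem2 γ hγ.1, ?_⟩, hcancel γ⟩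
    rw [middle (α₁ * γ), hcancel γ]
    exact hγ.2
  have hbij : Set.BijOn (fun β => conjChar α₁ * β)
      {β | IsIrrChar G β ∧ charInner G (χ * ψ) β ≠ 0}
      {γ | IsIrrChar G γ ∧ charInner G (χ * conjChar χ) γ ≠ 0} :=
    ⟨hmaps, hinj.injOn, hsurj⟩
  refine ⟨hbij, middle, ?_⟩
  calc {β | IsIrrChar G β ∧ charInner G (χ * ψ) β ≠ 0}.ncard
      = ((fun β => conjChar α₁ * β) ''
          {β | IsIrrChar G β ∧ charInner G (χ * ψ) β ≠ 0}).ncard :=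
        (Set.ncard_image_of_injective _ hinj).symm
    _ = {γ | IsIrrChar G γ ∧ charInner G (χ * conjChar χ) γ ≠ 0}.ncard := by
        rw [hbij.image_eq]
end
end
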